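/- arXiv:1504.07434 — 13 statements merged into one kernel-verified Lean document; each statement's English description precedes it below -/
import Mathlib

section
/- The natural transformation θ := (Ω⁻¹F)∘(UΛ) : B∘C → C∘B is a lax morphism of monads from 𝔹 to 𝔹 along C, i.e. (Cμ)∘(θB)∘(Bθ) = θ∘(μC) and θ∘(ηC) = Cη. -/
/-!
STATEMENT 0: Given an adjunction `F ⊣ U` with induced monad `𝔹 = (B = UF, μ = UεF, η)`,
and a lift `S` of `C` through the adjunction via a natural isomorphism `Ω : C∘U ≅ U∘S`,
the natural transformation `θ := (Ω⁻¹F)∘(UΛ) : B∘C → C∘B` (where `Λ` is the mate of `Ω`)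
is a lax morphism of monads from `𝔹` to `𝔹` along `C`:
`(Cμ)∘(θB)∘(Bθ) = θ∘(μC)` and `θ∘(ηC) = Cη`.
-/

open CategoryTheory

namespace Stmt0

variable {A B : Type*} [Category A] [Category B]

/-- The mate `Λ : F∘C ⟶ S∘F` of `Ω`, componentwise:
`Λ = (εSF) ∘ (FΩF) ∘ (FCη)`. -/
def mate (F : A ⥤ B) (U : B ⥤ A) (adj : F ⊣ U) (S : B ⥤ B) (C : A ⥤ A)
    (Ω : U ⋙ C ≅ S ⋙ U) (X : A) : F.obj (C.obj X) ⟶ S.obj (F.obj X) :=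
  F.map (C.map (adj.unit.app X)) ≫ F.map (Ω.hom.app (F.obj X)) ≫
    adj.counit.app (S.obj (F.obj X))

/-- `θ := (Ω⁻¹F) ∘ (UΛ) : B∘C ⟶ C∘B`, componentwise. -/
def theta (F : A ⥤ B) (U : B ⥤ A) (adj : F ⊣ U) (S : B ⥤ B) (C : A ⥤ A)
    (Ω : U ⋙ C ≅ S ⋙ U) (X : A) :
    U.obj (F.obj (C.obj X)) ⟶ C.obj (U.obj (F.obj X)) :=
  U.map (mate F U adj S C Ω X) ≫ Ω.inv.app (F.obj X)

lemma key (F : A ⥤ B) (U : B ⥤ A) (adj : F ⊣ U) (S : B ⥤ B) (C : A ⥤ A)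
    (Ω : U ⋙ C ≅ S ⋙ U) (X : A) :
    F.map (Ω.inv.app (F.obj X)) ≫ mate F U adj S C Ω (U.obj (F.obj X)) ≫
      S.map (adj.counit.app (F.obj X)) = adj.counit.app (S.obj (F.obj X)) := by
  have h2 := adj.counit.naturality (S.map (adj.counit.app (F.obj X)))
  have h := Ω.hom.naturality (adj.counit.app (F.obj X))
  simp only [Functor.comp_obj, Functor.id_obj, Functor.comp_map, Functor.id_map] at h h2
  simp only [mate, Category.assoc]
  rw [← h2, ← F.map_comp_assoc, ← F.map_comp_assoc (Ω.hom.app _) (U.map _), ← h]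
  rw [← F.map_comp_assoc]
  simp only [Category.assoc]
  rw [← C.map_comp_assoc, adj.right_triangle_components, C.map_id, Category.id_comp,
    Iso.inv_hom_id_app, F.map_id, Category.id_comp]

/-- `θ` is a lax morphism of monads from `𝔹` to `𝔹` along `C`. -/
theorem theta_is_lax_morphism_of_monads
    (F : A ⥤ B) (U : B ⥤ A) (adj : F ⊣ U) (S : B ⥤ B) (C : A ⥤ A)
    (Ω : U ⋙ C ≅ S ⋙ U) :
    -- multiplication compatibility: `(Cμ)∘(θB)∘(Bθ) = θ∘(μC)`
    (∀ X : A,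
      U.map (F.map (theta F U adj S C Ω X)) ≫
        theta F U adj S C Ω (U.obj (F.obj X)) ≫
        C.map (U.map (adj.counit.app (F.obj X)))
      = U.map (adj.counit.app (F.obj (C.obj X))) ≫ theta F U adj S C Ω X) ∧
    -- unit compatibility: `θ∘(ηC) = Cη`
    (∀ X : A,
      adj.unit.app (C.obj X) ≫ theta F U adj S C Ω X = C.map (adj.unit.app X)) := by
  constructor
  · intro X
    have hΩ := Ω.inv.naturality (adj.counit.app (F.obj X))
    simp only [Functor.comp_obj, Functor.id_obj, Functor.comp_map, Functor.id_map] at hΩ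
    calc U.map (F.map (theta F U adj S C Ω X)) ≫
          theta F U adj S C Ω (U.obj (F.obj X)) ≫
          C.map (U.map (adj.counit.app (F.obj X)))
        = U.map (F.map (U.map (mate F U adj S C Ω X))) ≫
            U.map (F.map (Ω.inv.app (F.obj X)) ≫ mate F U adj S C Ω (U.obj (F.obj X)) ≫
              S.map (adj.counit.app (F.obj X))) ≫ Ω.inv.app (F.obj X) := by
          simp only [theta, Functor.map_comp, Category.assoc]
          rw [← hΩ]
      _ = U.map (F.map (U.map (mate F U adj S C Ω X))) ≫
            U.map (adj.counit.app (S.obj (F.obj X))) ≫ Ω.inv.app (F.obj X) := by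
          rw [key]
      _ = U.map (adj.counit.app (F.obj (C.obj X))) ≫ theta F U adj S C Ω X := by
          have h3 := adj.counit.naturality (mate F U adj S C Ω X)
          simp only [Functor.comp_obj, Functor.id_obj, Functor.comp_map,
            Functor.id_map] at h3
          rw [theta, ← U.map_comp_assoc, h3, U.map_comp_assoc]
  · intro X
    have h1 := adj.unit.naturality (C.map (adj.unit.app X))
    have h2 := adj.unit.naturality (Ω.hom.app (F.obj X))
    simp only [Functor.comp_obj, Functor.id_obj, Functor.comp_map, Functor.id_map] at h1 h2
    simp only [theta, mate, Functor.map_comp, Category.assoc]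
    rw [← reassoc_of% h1, ← reassoc_of% h2, adj.right_triangle_components_assoc]
    simp

end Stmt0
end

section
/- The natural transformation χ := (ΛU)∘(FΩ⁻¹) : T∘S → S∘T is a lax morphism of comonads from 𝕋 to 𝕋 along S, i.e. (χT)∘(Tχ)∘(Δ^T S) = (SΔ^T)∘χ and (Sε^T)∘χ = ε^T S. -/
/-!
STATEMENT 1: Given an adjunction `F ⊣ U` with induced comonad `𝕋 = (T = FU, Δ^T = FηU, ε)`,
and a lift `S` of `C` through the adjunction via a natural isomorphism `Ω : C∘U ≅ U∘S`,
the natural transformation `χ := (ΛU)∘(FΩ⁻¹) : T∘S → S∘T` is a lax morphism of comonads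
from `𝕋` to `𝕋` along `S`: `(χT)∘(Tχ)∘(Δ^T S) = (SΔ^T)∘χ` and `(Sε^T)∘χ = ε^T S`.
-/

open CategoryTheory

namespace Stmt1

variable {A B : Type*} [Category A] [Category B]

/-- The mate `Λ : F∘C ⟶ S∘F` of `Ω`, componentwise:
`Λ = (εSF) ∘ (FΩF) ∘ (FCη)`. -/
def mate (F : A ⥤ B) (U : B ⥤ A) (adj : F ⊣ U) (S : B ⥤ B) (C : A ⥤ A)
    (Ω : U ⋙ C ≅ S ⋙ U) (X : A) : F.obj (C.obj X) ⟶ S.obj (F.obj X) :=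
  F.map (C.map (adj.unit.app X)) ≫ F.map (Ω.hom.app (F.obj X)) ≫
    adj.counit.app (S.obj (F.obj X))

/-- `χ := (ΛU) ∘ (FΩ⁻¹) : T∘S ⟶ S∘T`, componentwise. -/
def chi (F : A ⥤ B) (U : B ⥤ A) (adj : F ⊣ U) (S : B ⥤ B) (C : A ⥤ A)
    (Ω : U ⋙ C ≅ S ⋙ U) (Y : B) :
    F.obj (U.obj (S.obj Y)) ⟶ S.obj (F.obj (U.obj Y)) :=
  F.map (Ω.inv.app Y) ≫ mate F U adj S C Ω (U.obj Y)

/-- `χ` is a lax morphism of comonads from `𝕋` to `𝕋` along `S`. -/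
theorem chi_is_lax_morphism_of_comonads
    (F : A ⥤ B) (U : B ⥤ A) (adj : F ⊣ U) (S : B ⥤ B) (C : A ⥤ A)
    (Ω : U ⋙ C ≅ S ⋙ U) :
    -- comultiplication compatibility: `(χT)∘(Tχ)∘(Δ^T S) = (SΔ^T)∘χ`
    (∀ Y : B,
      F.map (adj.unit.app (U.obj (S.obj Y))) ≫
        F.map (U.map (chi F U adj S C Ω Y)) ≫
        chi F U adj S C Ω (F.obj (U.obj Y))
      = chi F U adj S C Ω Y ≫ S.map (F.map (adj.unit.app (U.obj Y)))) ∧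
    -- counit compatibility: `(Sε^T)∘χ = ε^T S`
    (∀ Y : B,
      chi F U adj S C Ω Y ≫ S.map (adj.counit.app Y)
        = adj.counit.app (S.obj Y)) := by

  constructor
  · intro Y
    refine (adj.homEquiv _ _).injective ?_
    simp [Adjunction.homEquiv_unit, chi, mate]
    have h := Ω.hom.naturality (F.map (adj.unit.app (U.obj Y)))
    simp only [Functor.comp_map, Functor.id_obj, Functor.comp_obj] at h
    rw [← h]; simp only [← C.map_comp_assoc, adj.unit_naturality]
  · intro Y
    have h1 : adj.counit.app (S.obj (F.obj (U.obj Y))) ≫ S.map (adj.counit.app Y)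
        = F.map (U.map (S.map (adj.counit.app Y))) ≫ adj.counit.app (S.obj Y) := by
      simpa using (adj.counit.naturality (S.map (adj.counit.app Y))).symm
    have h2 : Ω.hom.app (F.obj (U.obj Y)) ≫ U.map (S.map (adj.counit.app Y))
        = C.map (U.map (adj.counit.app Y)) ≫ Ω.hom.app Y := by
      simpa using (Ω.hom.naturality (adj.counit.app Y)).symm
    simp only [chi, mate, Category.assoc, h1, ← F.map_comp_assoc, h2]
    rw [← Category.assoc (C.map (adj.unit.app (U.obj Y))), ← C.map_comp,
        adj.right_triangle_components]
    simp


end Stmt1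
end

section
/- The natural transformation θ := (Ω⁻¹F)∘(UΛ) is the unique lax morphism of monads θ' : B∘C → C∘B along C (i.e. satisfying (Cμ)∘(θ'B)∘(Bθ') = θ'∘(μC) and θ'∘(ηC) = Cη) such that (CUε)∘(θ'U) = Ω⁻¹∘(UεS)∘(UFΩ) as natural transformations UFCU → CU. -/
/-!
STATEMENT 2: `θ := (Ω⁻¹F)∘(UΛ)` is the unique lax morphism of monads
`θ' : B∘C → C∘B` along `C` such that `(CUε)∘(θ'U) = Ω⁻¹∘(UεS)∘(UFΩ)`
as natural transformations `UFCU → CU`.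
-/

open CategoryTheory

namespace Stmt2

variable {A B : Type*} [Category A] [Category B]

/-- The mate `Λ : F∘C ⟶ S∘F` of `Ω`, componentwise. -/
def mate (F : A ⥤ B) (U : B ⥤ A) (adj : F ⊣ U) (S : B ⥤ B) (C : A ⥤ A)
    (Ω : U ⋙ C ≅ S ⋙ U) (X : A) : F.obj (C.obj X) ⟶ S.obj (F.obj X) :=
  F.map (C.map (adj.unit.app X)) ≫ F.map (Ω.hom.app (F.obj X)) ≫
    adj.counit.app (S.obj (F.obj X))

/-- `θ := (Ω⁻¹F) ∘ (UΛ) : B∘C ⟶ C∘B`, componentwise. -/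
def theta (F : A ⥤ B) (U : B ⥤ A) (adj : F ⊣ U) (S : B ⥤ B) (C : A ⥤ A)
    (Ω : U ⋙ C ≅ S ⋙ U) (X : A) :
    U.obj (F.obj (C.obj X)) ⟶ C.obj (U.obj (F.obj X)) :=
  U.map (mate F U adj S C Ω X) ≫ Ω.inv.app (F.obj X)

theorem hdiag' (F : A ⥤ B) (U : B ⥤ A) (adj : F ⊣ U) (S : B ⥤ B) (C : A ⥤ A)
    (Ω : U ⋙ C ≅ S ⋙ U) :
    ∀ Y : B,
      theta F U adj S C Ω (U.obj Y) ≫ C.map (U.map (adj.counit.app Y))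
      = U.map (F.map (Ω.hom.app Y)) ≫ U.map (adj.counit.app (S.obj Y)) ≫
          Ω.inv.app Y := by
  intro Y
  have hinv := Ω.inv.naturality (adj.counit.app Y)
  have hhom := Ω.hom.naturality (adj.counit.app Y)
  have hcou := adj.counit.naturality (S.map (adj.counit.app Y))
  simp only [Functor.comp_map, Functor.id_obj, Functor.comp_obj, Functor.id_map] at hinv hhom hcou
  simp only [theta, mate, Functor.map_comp, Category.assoc]
  rw [← hinv, ← U.map_comp_assoc (adj.counit.app (S.obj (F.obj (U.obj Y)))), ← hcou, U.map_comp_assoc,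
    ← U.map_comp_assoc (F.map (Ω.hom.app (F.obj (U.obj Y)))), ← F.map_comp, ← hhom,
    F.map_comp, U.map_comp_assoc, ← U.map_comp_assoc (F.map (C.map (adj.unit.app (U.obj Y)))),
    ← F.map_comp, ← C.map_comp, adj.right_triangle_components]
  simp

/-- `θ` is the unique lax morphism of monads `θ' : B∘C → C∘B` along `C`
satisfying `(CUε)∘(θ'U) = Ω⁻¹∘(UεS)∘(UFΩ)`. -/
theorem theta_unique
    (F : A ⥤ B) (U : B ⥤ A) (adj : F ⊣ U) (S : B ⥤ B) (C : A ⥤ A)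
    (Ω : U ⋙ C ≅ S ⋙ U) :
    -- `θ` is a lax morphism of monads:
    (∀ X : A,
      U.map (F.map (theta F U adj S C Ω X)) ≫
        theta F U adj S C Ω (U.obj (F.obj X)) ≫
        C.map (U.map (adj.counit.app (F.obj X)))
      = U.map (adj.counit.app (F.obj (C.obj X))) ≫ theta F U adj S C Ω X) ∧
    (∀ X : A,
      adj.unit.app (C.obj X) ≫ theta F U adj S C Ω X = C.map (adj.unit.app X)) ∧
    -- `θ` makes the diagram commute:
    (∀ Y : B,
      theta F U adj S C Ω (U.obj Y) ≫ C.map (U.map (adj.counit.app Y))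
      = U.map (F.map (Ω.hom.app Y)) ≫ U.map (adj.counit.app (S.obj Y)) ≫
          Ω.inv.app Y) ∧
    -- and it is the unique such lax morphism:
    (∀ θ' : (C ⋙ F ⋙ U : A ⥤ A) ⟶ ((F ⋙ U) ⋙ C : A ⥤ A),
      (∀ X : A,
        U.map (F.map (θ'.app X)) ≫ θ'.app (U.obj (F.obj X)) ≫
          C.map (U.map (adj.counit.app (F.obj X)))
        = U.map (adj.counit.app (F.obj (C.obj X))) ≫ θ'.app X) →
      (∀ X : A,
        adj.unit.app (C.obj X) ≫ θ'.app X = C.map (adj.unit.app X)) →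
      (∀ Y : B,
        θ'.app (U.obj Y) ≫ C.map (U.map (adj.counit.app Y))
        = U.map (F.map (Ω.hom.app Y)) ≫ U.map (adj.counit.app (S.obj Y)) ≫
            Ω.inv.app Y) →
      ∀ X : A, θ'.app X = theta F U adj S C Ω X) := by
  constructor
  · intro X
    rw [hdiag' F U adj S C Ω (F.obj X)]
    have hcou := adj.counit.naturality (mate F U adj S C Ω X)
    simp only [Functor.comp_map, Functor.id_map] at hcou
    simp only [theta, Functor.map_comp, Category.assoc]
    rw [← U.map_comp_assoc (F.map (Ω.inv.app (F.obj X))), ← F.map_comp,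
      Iso.inv_hom_id_app, F.map_id, U.map_id, Category.id_comp,
      ← U.map_comp_assoc, hcou, U.map_comp_assoc]
  refine ⟨?_, hdiag' F U adj S C Ω, ?_⟩
  · intro X
    have h1 := adj.unit.naturality (C.map (adj.unit.app X))
    have h2 := adj.unit.naturality (Ω.hom.app (F.obj X))
    simp only [Functor.comp_map, Functor.id_obj, Functor.id_map, Functor.comp_obj] at h1 h2
    simp only [theta, mate, Functor.map_comp]
    slice_lhs 1 2 => rw [← h1]
    slice_lhs 2 3 => rw [← h2]
    simp
  · intro θ' h1 h2 h3 X
    have hn := θ'.naturality (adj.unit.app X)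
    simp only [Functor.comp_map, Functor.comp_obj, Functor.id_obj] at hn
    have key := h3 (F.obj X)
    have tri : C.map (U.map (F.map (adj.unit.app X))) ≫
        C.map (U.map (adj.counit.app (F.obj X))) = 𝟙 _ := by
      rw [← C.map_comp, ← U.map_comp, show F.map (adj.unit.app X) ≫ adj.counit.app (F.obj X) = 𝟙 _ from adj.left_triangle_components X]; simp
    calc θ'.app X
        = θ'.app X ≫ C.map (U.map (F.map (adj.unit.app X))) ≫
            C.map (U.map (adj.counit.app (F.obj X))) := by rw [tri]; simp
      _ = U.map (F.map (C.map (adj.unit.app X))) ≫ θ'.app (U.obj (F.obj X)) ≫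
            C.map (U.map (adj.counit.app (F.obj X))) := by
          rw [← Category.assoc, ← hn, Category.assoc]
      _ = U.map (F.map (C.map (adj.unit.app X))) ≫ U.map (F.map (Ω.hom.app (F.obj X))) ≫
            U.map (adj.counit.app (S.obj (F.obj X))) ≫ Ω.inv.app (F.obj X) := by rw [key]
      _ = theta F U adj S C Ω X := by simp [theta, mate]

end Stmt2
end

section
/- The natural transformation χ := (ΛU)∘(FΩ⁻¹) is the unique lax morphism of comonads χ' : T∘S → S∘T along S (i.e. satisfying (χ'T)∘(Tχ')∘(Δ^T S) = (SΔ^T)∘χ' and (Sε^T)∘χ' = ε^T S) such that (Uχ')∘(ηUS) = (ΩFU)∘(CηU)∘Ω⁻¹ as natural transformations US → USFU. -/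
/-!
STATEMENT 3: `χ := (ΛU)∘(FΩ⁻¹)` is the unique lax morphism of comonads
`χ' : T∘S → S∘T` along `S` such that `(Uχ')∘(ηUS) = (ΩFU)∘(CηU)∘Ω⁻¹`
as natural transformations `US → USFU`.
-/

open CategoryTheory

namespace Stmt3

variable {A B : Type*} [Category A] [Category B]

lemma hom_ext (F : A ⥤ B) (U : B ⥤ A) (adj : F ⊣ U) {X : A} {Z : B}
    (f g : F.obj X ⟶ Z)
    (h : adj.unit.app X ≫ U.map f = adj.unit.app X ≫ U.map g) : f = g := by
  apply (adj.homEquiv X Z).injective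
  simpa [Adjunction.homEquiv_unit] using h

/-- The mate `Λ : F∘C ⟶ S∘F` of `Ω`, componentwise. -/
def mate (F : A ⥤ B) (U : B ⥤ A) (adj : F ⊣ U) (S : B ⥤ B) (C : A ⥤ A)
    (Ω : U ⋙ C ≅ S ⋙ U) (X : A) : F.obj (C.obj X) ⟶ S.obj (F.obj X) :=
  F.map (C.map (adj.unit.app X)) ≫ F.map (Ω.hom.app (F.obj X)) ≫
    adj.counit.app (S.obj (F.obj X))

/-- `χ := (ΛU) ∘ (FΩ⁻¹) : T∘S ⟶ S∘T`, componentwise. -/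
def chi (F : A ⥤ B) (U : B ⥤ A) (adj : F ⊣ U) (S : B ⥤ B) (C : A ⥤ A)
    (Ω : U ⋙ C ≅ S ⋙ U) (Y : B) :
    F.obj (U.obj (S.obj Y)) ⟶ S.obj (F.obj (U.obj Y)) :=
  F.map (Ω.inv.app Y) ≫ mate F U adj S C Ω (U.obj Y)

lemma cond3 (F : A ⥤ B) (U : B ⥤ A) (adj : F ⊣ U) (S : B ⥤ B) (C : A ⥤ A)
    (Ω : U ⋙ C ≅ S ⋙ U) (Y : B) :
    adj.unit.app (U.obj (S.obj Y)) ≫ U.map (chi F U adj S C Ω Y)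
      = Ω.inv.app Y ≫ C.map (adj.unit.app (U.obj Y)) ≫
          Ω.hom.app (F.obj (U.obj Y)) := by
  simp [chi, mate]

lemma cond2 (F : A ⥤ B) (U : B ⥤ A) (adj : F ⊣ U) (S : B ⥤ B) (C : A ⥤ A)
    (Ω : U ⋙ C ≅ S ⋙ U) (Y : B) :
    chi F U adj S C Ω Y ≫ S.map (adj.counit.app Y) = adj.counit.app (S.obj Y) := by
  simp only [chi, mate, Category.assoc]
  simp only [Functor.id_obj]
  have hc := adj.counit_naturality (S.map (adj.counit.app Y))
  simp only [Functor.id_obj, Functor.comp_obj] at hc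
  rw [← hc, ← Category.assoc (F.map (Ω.hom.app _)), ← F.map_comp]
  have := Ω.hom.naturality (adj.counit.app Y)
  simp only [Functor.comp_map, Functor.id_obj, Functor.comp_obj] at this
  rw [← this]
  simp only [Functor.map_comp, Category.assoc]
  rw [← Category.assoc (F.map (C.map _)), ← F.map_comp, ← C.map_comp]
  simp only [Adjunction.right_triangle_components, C.map_id, F.map_id,
    Category.id_comp]
  rw [← F.map_comp_assoc, Iso.inv_hom_id_app]
  simp

lemma cond1 (F : A ⥤ B) (U : B ⥤ A) (adj : F ⊣ U) (S : B ⥤ B) (C : A ⥤ A)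
    (Ω : U ⋙ C ≅ S ⋙ U) (Y : B) :
    F.map (adj.unit.app (U.obj (S.obj Y))) ≫
        F.map (U.map (chi F U adj S C Ω Y)) ≫
        chi F U adj S C Ω (F.obj (U.obj Y))
      = chi F U adj S C Ω Y ≫ S.map (F.map (adj.unit.app (U.obj Y))) := by
  apply hom_ext F U adj
  simp only [Functor.map_comp, Category.assoc, Functor.id_obj]
  rw [adj.unit_naturality_assoc, adj.unit_naturality_assoc]
  rw [reassoc_of% (cond3 F U adj S C Ω Y), cond3 F U adj S C Ω (F.obj (U.obj Y)),
    reassoc_of% (cond3 F U adj S C Ω Y)]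
  have hΩ := Ω.hom.naturality (F.map (adj.unit.app (U.obj Y)))
  simp only [Functor.comp_map, Functor.id_obj, Functor.comp_obj] at hΩ
  rw [← hΩ]
  simp only [Iso.hom_inv_id_app_assoc]
  rw [← Category.assoc (C.map _), ← C.map_comp, ← adj.unit_naturality,
    C.map_comp]
  simp

/-- `χ` is the unique lax morphism of comonads `χ' : T∘S → S∘T` along `S`
satisfying `(Uχ')∘(ηUS) = (ΩFU)∘(CηU)∘Ω⁻¹`. -/
theorem chi_unique
    (F : A ⥤ B) (U : B ⥤ A) (adj : F ⊣ U) (S : B ⥤ B) (C : A ⥤ A)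
    (Ω : U ⋙ C ≅ S ⋙ U) :
    -- `χ` is a lax morphism of comonads:
    (∀ Y : B,
      F.map (adj.unit.app (U.obj (S.obj Y))) ≫
        F.map (U.map (chi F U adj S C Ω Y)) ≫
        chi F U adj S C Ω (F.obj (U.obj Y))
      = chi F U adj S C Ω Y ≫ S.map (F.map (adj.unit.app (U.obj Y)))) ∧
    (∀ Y : B,
      chi F U adj S C Ω Y ≫ S.map (adj.counit.app Y) = adj.counit.app (S.obj Y)) ∧
    -- `χ` makes the diagram commute:
    (∀ Y : B,
      adj.unit.app (U.obj (S.obj Y)) ≫ U.map (chi F U adj S C Ω Y)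
      = Ω.inv.app Y ≫ C.map (adj.unit.app (U.obj Y)) ≫
          Ω.hom.app (F.obj (U.obj Y))) ∧
    -- and it is the unique such lax morphism:
    (∀ χ' : (S ⋙ U ⋙ F : B ⥤ B) ⟶ ((U ⋙ F) ⋙ S : B ⥤ B),
      (∀ Y : B,
        F.map (adj.unit.app (U.obj (S.obj Y))) ≫
          F.map (U.map (χ'.app Y)) ≫ χ'.app (F.obj (U.obj Y))
        = χ'.app Y ≫ S.map (F.map (adj.unit.app (U.obj Y)))) →
      (∀ Y : B,
        χ'.app Y ≫ S.map (adj.counit.app Y) = adj.counit.app (S.obj Y)) →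
      (∀ Y : B,
        adj.unit.app (U.obj (S.obj Y)) ≫ U.map (χ'.app Y)
        = Ω.inv.app Y ≫ C.map (adj.unit.app (U.obj Y)) ≫
            Ω.hom.app (F.obj (U.obj Y))) →
      ∀ Y : B, χ'.app Y = chi F U adj S C Ω Y) := by
  refine ⟨cond1 F U adj S C Ω, cond2 F U adj S C Ω, cond3 F U adj S C Ω, ?_⟩
  intro χ' _ _ h3 Y
  exact hom_ext F U adj _ _ ((h3 Y).trans (cond3 F U adj S C Ω Y).symm)

end Stmt3
end

section
/- If ℂ = (C, Δ^C, ε^C) and 𝕊 = (S, Δ^S, ε^S) are comonads and Ω is a lax morphism of comonads, then χ := (ΛU)∘(FΩ⁻¹) : T∘S → S∘T is a comonad distributive law between 𝕋 and 𝕊, i.e. (Sε^T)∘χ = ε^T S, (ε^S T)∘χ = Tε^S, (SΔ^T)∘χ = (χT)∘(Tχ)∘(Δ^T S), and (Δ^S T)∘χ = (Sχ)∘(χS)∘(TΔ^S). -/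
/-!
STATEMENT 5: If `ℂ = (C, Δ^C, ε^C)` and `𝕊 = (S, Δ^S, ε^S)` are comonads and
`Ω : C∘U ≅ U∘S` is a lax morphism of comonads, then `χ := (ΛU)∘(FΩ⁻¹) : T∘S → S∘T`
is a comonad distributive law between `𝕋 = (FU, FηU, ε)` and `𝕊`.
-/

open CategoryTheory

namespace Stmt5

variable {A B : Type*} [Category A] [Category B]

/-- The mate `Λ : F∘C ⟶ S∘F` of `Ω`, componentwise. -/
def mate (F : A ⥤ B) (U : B ⥤ A) (adj : F ⊣ U) (S : B ⥤ B) (C : A ⥤ A)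
    (Ω : U ⋙ C ≅ S ⋙ U) (X : A) : F.obj (C.obj X) ⟶ S.obj (F.obj X) :=
  F.map (C.map (adj.unit.app X)) ≫ F.map (Ω.hom.app (F.obj X)) ≫
    adj.counit.app (S.obj (F.obj X))

/-- `χ := (ΛU) ∘ (FΩ⁻¹) : T∘S ⟶ S∘T`, componentwise. -/
def chi (F : A ⥤ B) (U : B ⥤ A) (adj : F ⊣ U) (S : B ⥤ B) (C : A ⥤ A)
    (Ω : U ⋙ C ≅ S ⋙ U) (Y : B) :
    F.obj (U.obj (S.obj Y)) ⟶ S.obj (F.obj (U.obj Y)) :=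
  F.map (Ω.inv.app Y) ≫ mate F U adj S C Ω (U.obj Y)

/-- Two maps out of `F.obj X` agree iff their adjoint transposes agree. -/
lemma hom_ext {F : A ⥤ B} {U : B ⥤ A} (adj : F ⊣ U) {X : A} {Z : B}
    {f g : F.obj X ⟶ Z}
    (h : adj.unit.app X ≫ U.map f = adj.unit.app X ≫ U.map g) : f = g := by
  apply (adj.homEquiv X Z).injective
  simpa [Adjunction.homEquiv_unit] using h

/-- The adjoint transpose of `χ`. -/
lemma transpose_chi (F : A ⥤ B) (U : B ⥤ A) (adj : F ⊣ U) (S : B ⥤ B) (C : A ⥤ A)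
    (Ω : U ⋙ C ≅ S ⋙ U) (Y : B) :
    adj.unit.app (U.obj (S.obj Y)) ≫ U.map (chi F U adj S C Ω Y)
    = Ω.inv.app Y ≫ C.map (adj.unit.app (U.obj Y)) ≫
        Ω.hom.app (F.obj (U.obj Y)) := by
  simp [chi, mate]

/-- If `ℂ` and `𝕊` are comonads and `Ω` is a lax morphism of comonads, then
`χ` is a comonad distributive law between `𝕋` and `𝕊`. -/
theorem chi_comonad_distributive_law
    (F : A ⥤ B) (U : B ⥤ A) (adj : F ⊣ U)
    (SS : Comonad B) (CC : Comonad A)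
    (Ω : U ⋙ CC.toFunctor ≅ SS.toFunctor ⋙ U)
    -- `Ω` is a lax morphism of comonads: `(UΔ^S)∘Ω = (ΩS)∘(CΩ)∘(Δ^C U)`
    (hΩδ : ∀ Y : B,
      Ω.hom.app Y ≫ U.map (SS.δ.app Y)
      = CC.δ.app (U.obj Y) ≫ CC.map (Ω.hom.app Y) ≫ Ω.hom.app (SS.obj Y))
    -- and `(Uε^S)∘Ω = ε^C U`
    (hΩε : ∀ Y : B, Ω.hom.app Y ≫ U.map (SS.ε.app Y) = CC.ε.app (U.obj Y)) :
    -- `(Sε^T)∘χ = ε^T S`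
    (∀ Y : B,
      chi F U adj SS.toFunctor CC.toFunctor Ω Y ≫ SS.map (adj.counit.app Y)
      = adj.counit.app (SS.obj Y)) ∧
    -- `(ε^S T)∘χ = Tε^S`
    (∀ Y : B,
      chi F U adj SS.toFunctor CC.toFunctor Ω Y ≫ SS.ε.app (F.obj (U.obj Y))
      = F.map (U.map (SS.ε.app Y))) ∧
    -- `(SΔ^T)∘χ = (χT)∘(Tχ)∘(Δ^T S)`
    (∀ Y : B,
      chi F U adj SS.toFunctor CC.toFunctor Ω Y ≫
        SS.map (F.map (adj.unit.app (U.obj Y)))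
      = F.map (adj.unit.app (U.obj (SS.obj Y))) ≫
          F.map (U.map (chi F U adj SS.toFunctor CC.toFunctor Ω Y)) ≫
          chi F U adj SS.toFunctor CC.toFunctor Ω (F.obj (U.obj Y))) ∧
    -- `(Δ^S T)∘χ = (Sχ)∘(χS)∘(TΔ^S)`
    (∀ Y : B,
      chi F U adj SS.toFunctor CC.toFunctor Ω Y ≫ SS.δ.app (F.obj (U.obj Y))
      = F.map (U.map (SS.δ.app Y)) ≫
          chi F U adj SS.toFunctor CC.toFunctor Ω (SS.obj Y) ≫
          SS.map (chi F U adj SS.toFunctor CC.toFunctor Ω Y)) := by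
  refine ⟨fun Y => ?_, fun Y => ?_, fun Y => ?_, fun Y => ?_⟩
  · apply hom_ext adj
    rw [U.map_comp, reassoc_of% (transpose_chi F U adj SS.toFunctor CC.toFunctor Ω Y)]
    have h := Ω.hom.naturality (adj.counit.app Y)
    simp only [Functor.comp_map, Functor.comp_obj, Functor.id_obj] at h
    rw [← h, ← Functor.map_comp_assoc, adj.right_triangle_components]
    simp
  · apply hom_ext adj
    rw [U.map_comp, reassoc_of% (transpose_chi F U adj SS.toFunctor CC.toFunctor Ω Y),
      hΩε]
    have h := CC.ε.naturality (adj.unit.app (U.obj Y))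
    simp only [Functor.id_obj, Functor.id_map, Functor.comp_obj] at h
    rw [h, ← hΩε Y]
    simp
  · apply hom_ext adj
    rw [U.map_comp, reassoc_of% (transpose_chi F U adj SS.toFunctor CC.toFunctor Ω Y)]
    have h := Ω.hom.naturality (F.map (adj.unit.app (U.obj Y)))
    simp only [Functor.comp_map, Functor.comp_obj, Functor.id_obj] at h
    rw [← h]
    -- RHS
    rw [U.map_comp, U.map_comp]
    erw [adj.unit_naturality_assoc, adj.unit_naturality_assoc]
    rw [transpose_chi F U adj SS.toFunctor CC.toFunctor Ω (F.obj (U.obj Y)),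
      reassoc_of% (transpose_chi F U adj SS.toFunctor CC.toFunctor Ω Y)]
    simp only [Iso.hom_inv_id_app_assoc]
    rw [← Functor.map_comp_assoc, adj.unit_naturality, Functor.map_comp_assoc]
  · apply hom_ext adj
    rw [U.map_comp, reassoc_of% (transpose_chi F U adj SS.toFunctor CC.toFunctor Ω Y),
      hΩδ (F.obj (U.obj Y))]
    have hδ := CC.δ.naturality (adj.unit.app (U.obj Y))
    simp only [Functor.comp_map, Functor.comp_obj, Functor.id_obj] at hδ
    rw [reassoc_of% hδ]
    -- RHS
    rw [U.map_comp, U.map_comp]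
    erw [adj.unit_naturality_assoc]
    simp only [Functor.comp_obj]
    rw [reassoc_of% (transpose_chi F U adj SS.toFunctor CC.toFunctor Ω (SS.obj Y))]
    have h2 := Ω.hom.naturality (chi F U adj SS.toFunctor CC.toFunctor Ω Y)
    simp only [Functor.comp_map, Functor.comp_obj, Functor.id_obj] at h2
    rw [← h2]
    conv_rhs => rw [← Functor.map_comp_assoc,
      transpose_chi F U adj SS.toFunctor CC.toFunctor Ω Y]
    simp only [Functor.map_comp, Category.assoc]
    have key : U.map (SS.δ.app Y) ≫ Ω.inv.app (SS.obj Y) ≫ CC.map (Ω.inv.app Y)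
        = Ω.inv.app Y ≫ CC.δ.app (U.obj Y) := by
      have hh : U.map (SS.δ.app Y)
          = Ω.inv.app Y ≫ Ω.hom.app Y ≫ U.map (SS.δ.app Y) := by simp
      rw [hh, hΩδ Y]
      simp only [Category.assoc, Iso.hom_inv_id_app_assoc, ← Functor.map_comp,
        Iso.hom_inv_id_app, Functor.map_id, Category.comp_id]
      simp
    rw [reassoc_of% key]

end Stmt5
end

section
/- Let χ^S : TS → ST and χ^V : TV → VT be the lax morphisms of comonads determined by the two lifts S and V via Theorem 2.7, i.e. χ^S = (Λ_Ω U)∘(FΩ⁻¹) and χ^V = (Λ_Φ U)∘(FΦ⁻¹) where Λ_Ω = (εSF)∘(FΩF)∘(FCη) and Λ_Φ = (εVF)∘(FΦF)∘(FCη). Then the Galois map sends χ^S to χ^V: for every object Y of B, Γ^{S,V}_{USY, TY}(χ^S_Y) = χ^V_Y ∘ F(Φ_Y ∘ Ω⁻¹_Y). -/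
/-!
STATEMENT 7: For two lifts `S, V` of `C` through an adjunction `F ⊣ U`
(via `Ω` and `Φ`) with associated lax endomorphisms of comonads
`χ^S := (Λ_Ω U)∘(FΩ⁻¹)` and `χ^V := (Λ_Φ U)∘(FΦ⁻¹)`, the Galois map sends
`χ^S` to `χ^V`: for all `Y`, `Γ^{S,V}_{USY,TY}(χ^S_Y) = χ^V_Y ∘ F(Φ_Y ∘ Ω⁻¹_Y)`.
-/

open CategoryTheory

namespace Stmt7

variable {A B : Type*} [Category A] [Category B]

/-- The mate `Λ : F∘C ⟶ S∘F` of a natural isomorphism `Ω : C∘U ≅ U∘S`. -/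
def mate (F : A ⥤ B) (U : B ⥤ A) (adj : F ⊣ U) (S : B ⥤ B) (C : A ⥤ A)
    (Ω : U ⋙ C ≅ S ⋙ U) (X : A) : F.obj (C.obj X) ⟶ S.obj (F.obj X) :=
  F.map (C.map (adj.unit.app X)) ≫ F.map (Ω.hom.app (F.obj X)) ≫
    adj.counit.app (S.obj (F.obj X))

/-- `χ := (ΛU) ∘ (FΩ⁻¹) : T∘S ⟶ S∘T`, componentwise. -/
def chi (F : A ⥤ B) (U : B ⥤ A) (adj : F ⊣ U) (S : B ⥤ B) (C : A ⥤ A)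
    (Ω : U ⋙ C ≅ S ⋙ U) (Y : B) :
    F.obj (U.obj (S.obj Y)) ⟶ S.obj (F.obj (U.obj Y)) :=
  F.map (Ω.inv.app Y) ≫ mate F U adj S C Ω (U.obj Y)

/-- The Galois map `Γ^{S,V}_{X,Y}`. -/
def galois (F : A ⥤ B) (U : B ⥤ A) (adj : F ⊣ U) (S V : B ⥤ B) (C : A ⥤ A)
    (Ω : U ⋙ C ≅ S ⋙ U) (Φ : U ⋙ C ≅ V ⋙ U) (X : A) (Y : B)
    (f : F.obj X ⟶ S.obj Y) : F.obj X ⟶ V.obj Y :=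
  F.map (adj.unit.app X) ≫ F.map (U.map f) ≫
    F.map (Ω.inv.app Y ≫ Φ.hom.app Y) ≫ adj.counit.app (V.obj Y)

/-- The Galois map sends `χ^S` to `χ^V`. -/
theorem galois_chi
    (F : A ⥤ B) (U : B ⥤ A) (adj : F ⊣ U) (S V : B ⥤ B) (C : A ⥤ A)
    (Ω : U ⋙ C ≅ S ⋙ U) (Φ : U ⋙ C ≅ V ⋙ U) (Y : B) :
    galois F U adj S V C Ω Φ (U.obj (S.obj Y)) (F.obj (U.obj Y))
        (chi F U adj S C Ω Y)
      = F.map (Ω.inv.app Y ≫ Φ.hom.app Y) ≫ chi F U adj V C Φ Y := by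
  have key : ∀ X, adj.unit.app (C.obj X) ≫ U.map (mate F U adj S C Ω X)
      = C.map (adj.unit.app X) ≫ Ω.hom.app (F.obj X) := by
    intro X
    simp [mate, ← adj.unit_naturality_assoc]
  have main : adj.unit.app (U.obj (S.obj Y)) ≫ U.map (chi F U adj S C Ω Y) ≫
        Ω.inv.app (F.obj (U.obj Y)) ≫ Φ.hom.app (F.obj (U.obj Y))
      = (Ω.inv.app Y ≫ Φ.hom.app Y) ≫ Φ.inv.app Y ≫
        C.map (adj.unit.app (U.obj Y)) ≫ Φ.hom.app (F.obj (U.obj Y)) := by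
    simp only [chi, U.map_comp]
    rw [show U.map (F.map (Ω.inv.app Y)) = (F ⋙ U).map (Ω.inv.app Y) from rfl]
    simp only [Category.assoc]
    rw [← adj.unit.naturality_assoc, Functor.id_map]
    erw [reassoc_of% (key (U.obj Y))]
    simp
  calc galois F U adj S V C Ω Φ (U.obj (S.obj Y)) (F.obj (U.obj Y))
        (chi F U adj S C Ω Y)
      = F.map (adj.unit.app (U.obj (S.obj Y)) ≫ U.map (chi F U adj S C Ω Y) ≫
          Ω.inv.app (F.obj (U.obj Y)) ≫ Φ.hom.app (F.obj (U.obj Y))) ≫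
          adj.counit.app (V.obj (F.obj (U.obj Y))) := by
        simp [galois, F.map_comp]
    _ = F.map ((Ω.inv.app Y ≫ Φ.hom.app Y) ≫ Φ.inv.app Y ≫
          C.map (adj.unit.app (U.obj Y)) ≫ Φ.hom.app (F.obj (U.obj Y))) ≫
          adj.counit.app (V.obj (F.obj (U.obj Y))) := by rw [main]
    _ = F.map (Ω.inv.app Y ≫ Φ.hom.app Y) ≫ chi F U adj V C Φ Y := by
        simp only [chi, mate, Functor.map_comp, Category.assoc]

end Stmt7
end

section
/- If F is V-Galois (i.e. the natural transformation Γ^{T,V} := (εV)∘(FΦ)∘(FηU) : T → V is an isomorphism), then the natural transformation β := (Bμ)∘(θB)∘(BηB) : B∘B → B∘B is an isomorphism, where θ : B∘B → B∘B is the lax morphism of monads arising from the lift V of B. -/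
/-!
STATEMENT 8: Let `V` be a lift of the monad functor `B = UF` itself through the
adjunction `F ⊣ U`, via `Φ : B∘U ≅ U∘V`, and let `θ := (Φ⁻¹F)∘(UΛ_Φ) : B∘B → B∘B`
be the resulting lax morphism of monads.  If `F` is `V`-Galois, i.e. the natural
transformation `Γ^{T,V} := (εV)∘(FΦ)∘(FηU) : T → V` is an isomorphism, then
`β := (Bμ)∘(θB)∘(BηB) : B∘B → B∘B` is an isomorphism.
-/

open CategoryTheory

namespace Stmt8

variable {A B : Type*} [Category A] [Category B]

/-- The mate `Λ_Φ := (εVF)∘(FΦF)∘(FBη) : F∘B ⟶ V∘F` of `Φ`, componentwise. -/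
def mateB (F : A ⥤ B) (U : B ⥤ A) (adj : F ⊣ U) (V : B ⥤ B)
    (Φ : U ⋙ F ⋙ U ≅ V ⋙ U) (X : A) :
    F.obj (U.obj (F.obj X)) ⟶ V.obj (F.obj X) :=
  F.map (U.map (F.map (adj.unit.app X))) ≫ F.map (Φ.hom.app (F.obj X)) ≫
    adj.counit.app (V.obj (F.obj X))

/-- `θ := (Φ⁻¹F)∘(UΛ_Φ) : B∘B ⟶ B∘B`, componentwise. -/
def thetaB (F : A ⥤ B) (U : B ⥤ A) (adj : F ⊣ U) (V : B ⥤ B)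
    (Φ : U ⋙ F ⋙ U ≅ V ⋙ U) (X : A) :
    U.obj (F.obj (U.obj (F.obj X))) ⟶ U.obj (F.obj (U.obj (F.obj X))) :=
  U.map (mateB F U adj V Φ X) ≫ Φ.inv.app (F.obj X)

/-- The Galois natural transformation `Γ^{T,V} := (εV)∘(FΦ)∘(FηU) : T ⟶ V`. -/
def GammaTV (F : A ⥤ B) (U : B ⥤ A) (adj : F ⊣ U) (V : B ⥤ B)
    (Φ : U ⋙ F ⋙ U ≅ V ⋙ U) (Y : B) : F.obj (U.obj Y) ⟶ V.obj Y :=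
  F.map (adj.unit.app (U.obj Y)) ≫ F.map (Φ.hom.app Y) ≫
    adj.counit.app (V.obj Y)

/-- `β := (Bμ)∘(θB)∘(BηB) : B∘B ⟶ B∘B`, componentwise. -/
def beta (F : A ⥤ B) (U : B ⥤ A) (adj : F ⊣ U) (V : B ⥤ B)
    (Φ : U ⋙ F ⋙ U ≅ V ⋙ U) (X : A) :
    U.obj (F.obj (U.obj (F.obj X))) ⟶ U.obj (F.obj (U.obj (F.obj X))) :=
  U.map (F.map (adj.unit.app (U.obj (F.obj X)))) ≫
    thetaB F U adj V Φ (U.obj (F.obj X)) ≫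
    U.map (F.map (U.map (adj.counit.app (F.obj X))))

lemma beta_eq (F : A ⥤ B) (U : B ⥤ A) (adj : F ⊣ U) (V : B ⥤ B)
    (Φ : U ⋙ F ⋙ U ≅ V ⋙ U) (X : A) :
    beta F U adj V Φ X =
      U.map (GammaTV F U adj V Φ (F.obj X)) ≫ Φ.inv.app (F.obj X) := by
  unfold beta thetaB mateB GammaTV
  have hΦinv := Φ.inv.naturality (adj.counit.app (F.obj X))
  simp only [Functor.comp_obj, Functor.comp_map, Functor.id_obj, Functor.id_map] at hΦinv
  have hε := adj.counit.naturality (V.map (adj.counit.app (F.obj X)))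
  simp only [Functor.comp_obj, Functor.comp_map, Functor.id_obj, Functor.id_map] at hε
  have hΦ := Φ.hom.naturality (adj.counit.app (F.obj X))
  simp only [Functor.comp_obj, Functor.comp_map, Functor.id_obj, Functor.id_map] at hΦ
  simp only [Functor.map_comp, Category.assoc]
  slice_lhs 5 6 => rw [← hΦinv]
  slice_lhs 4 5 => rw [← U.map_comp, ← hε, U.map_comp]
  slice_lhs 3 4 => rw [← U.map_comp, ← F.map_comp, ← hΦ, F.map_comp, U.map_comp]
  slice_lhs 2 3 =>
    rw [← U.map_comp, ← F.map_comp, ← U.map_comp, ← F.map_comp,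
      adj.right_triangle_components, F.map_id, U.map_id, F.map_id, U.map_id]
  simp

/-- If `F` is `V`-Galois then `β` is an isomorphism. -/
theorem beta_isIso_of_V_Galois
    (F : A ⥤ B) (U : B ⥤ A) (adj : F ⊣ U) (V : B ⥤ B)
    (Φ : U ⋙ F ⋙ U ≅ V ⋙ U)
    (hGalois : ∀ Y : B, IsIso (GammaTV F U adj V Φ Y)) :
    ∀ X : A, IsIso (beta F U adj V Φ X) := by
  intro X
  rw [beta_eq]
  have := hGalois (F.obj X)
  infer_instance

end Stmt8
end

section
/- For a functor M : X → B, the assignment ρ ↦ (Ω⁻¹M)∘(Uρ)∘(ηUM) is a bijection between right χ-coalgebra structures ρ : TM → SM on M and ℂ-coalgebra structures ∇ : UM → CUM on the functor UM : X → A (i.e. natural transformations ∇ with (Δ^C UM)∘∇ = (C∇)∘∇ and (ε^C UM)∘∇ = id). -/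
/-!
STATEMENT 9: In the setting of an adjunction `F ⊣ U`, comonads `ℂ` on `A` and `𝕊` on `B`,
and a lax isomorphism `Ω : C∘U ≅ U∘S`, with resulting comonad distributive law
`χ := (ΛU)∘(FΩ⁻¹) : TS → ST`, for a functor `M : X → B` the assignment
`ρ ↦ (Ω⁻¹M)∘(Uρ)∘(ηUM)` is a bijection between right `χ`-coalgebra structures
`ρ : TM → SM` on `M` and `ℂ`-coalgebra structures `∇ : UM → CUM` on `UM`.
-/

open CategoryTheory

namespace Stmt9

variable {A B X : Type*} [Category A] [Category B] [Category X]

/-- The mate `Λ : F∘C ⟶ S∘F` of `Ω`, componentwise. -/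
def mate (F : A ⥤ B) (U : B ⥤ A) (adj : F ⊣ U) (S : B ⥤ B) (C : A ⥤ A)
    (Ω : U ⋙ C ≅ S ⋙ U) (X' : A) : F.obj (C.obj X') ⟶ S.obj (F.obj X') :=
  F.map (C.map (adj.unit.app X')) ≫ F.map (Ω.hom.app (F.obj X')) ≫
    adj.counit.app (S.obj (F.obj X'))

/-- `χ := (ΛU) ∘ (FΩ⁻¹) : T∘S ⟶ S∘T`, componentwise. -/
def chi (F : A ⥤ B) (U : B ⥤ A) (adj : F ⊣ U) (S : B ⥤ B) (C : A ⥤ A)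
    (Ω : U ⋙ C ≅ S ⋙ U) (Y : B) :
    F.obj (U.obj (S.obj Y)) ⟶ S.obj (F.obj (U.obj Y)) :=
  F.map (Ω.inv.app Y) ≫ mate F U adj S C Ω (U.obj Y)

section

variable (F : A ⥤ B) (U : B ⥤ A) (adj : F ⊣ U)
  (SS : Comonad B) (CC : Comonad A)
  (Ω : U ⋙ CC.toFunctor ≅ SS.toFunctor ⋙ U) (M : X ⥤ B)

/-- Right `χ`-coalgebra conditions for `ρ : TM ⟶ SM`. -/
def IsRightChiCoalgebra (ρ : (M ⋙ U ⋙ F : X ⥤ B) ⟶ (M ⋙ SS.toFunctor : X ⥤ B)) :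
    Prop :=
  (∀ x : X,
    ρ.app x ≫ SS.δ.app (M.obj x)
    = F.map (adj.unit.app (U.obj (M.obj x))) ≫ F.map (U.map (ρ.app x)) ≫
        chi F U adj SS.toFunctor CC.toFunctor Ω (M.obj x) ≫ SS.map (ρ.app x)) ∧
  (∀ x : X, ρ.app x ≫ SS.ε.app (M.obj x) = adj.counit.app (M.obj x))

/-- `ℂ`-coalgebra conditions for `∇ : UM ⟶ CUM`. -/
def IsCCoalgebra (nab : (M ⋙ U : X ⥤ A) ⟶ (M ⋙ U ⋙ CC.toFunctor : X ⥤ A)) : Prop :=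
  (∀ x : X, nab.app x ≫ CC.δ.app (U.obj (M.obj x))
      = nab.app x ≫ CC.map (nab.app x)) ∧
  (∀ x : X, nab.app x ≫ CC.ε.app (U.obj (M.obj x)) = 𝟙 (U.obj (M.obj x)))

end

section Helpers

variable (F : A ⥤ B) (U : B ⥤ A) (adj : F ⊣ U)
  (SS : Comonad B) (CC : Comonad A)
  (Ω : U ⋙ CC.toFunctor ≅ SS.toFunctor ⋙ U)

lemma transpose_inj {a : A} {b : B} {g g' : F.obj a ⟶ b}
    (h : adj.unit.app a ≫ U.map g = adj.unit.app a ≫ U.map g') : g = g' := by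
  have := (adj.homEquiv a b).injective (a₁ := g) (a₂ := g')
  simp only [Adjunction.homEquiv_unit] at this
  exact this h

lemma roundtrip {a : A} {b : B} (g : a ⟶ U.obj b) :
    adj.unit.app a ≫ U.map (F.map g ≫ adj.counit.app b) = g := by
  rw [U.map_comp]
  erw [Adjunction.unit_naturality_assoc, Adjunction.right_triangle_components]
  simp

lemma transpose_rhs (m : B) (ρx : F.obj (U.obj m) ⟶ SS.obj m) :
    adj.unit.app (U.obj m) ≫
      U.map (F.map (adj.unit.app (U.obj m)) ≫ F.map (U.map ρx) ≫
        chi F U adj SS.toFunctor CC.toFunctor Ω m ≫ SS.map ρx)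
    = (adj.unit.app (U.obj m) ≫ U.map ρx ≫ Ω.inv.app m) ≫
        CC.map (adj.unit.app (U.obj m) ≫ U.map ρx ≫ Ω.inv.app m) ≫
        CC.map (Ω.hom.app m) ≫ Ω.hom.app (SS.obj m) := by
  simp only [chi, mate, Functor.map_comp, Category.assoc]
  erw [Adjunction.unit_naturality_assoc, Adjunction.unit_naturality_assoc,
    Adjunction.unit_naturality_assoc, Adjunction.unit_naturality_assoc,
    Adjunction.unit_naturality_assoc, Adjunction.right_triangle_components_assoc]
  erw [← Ω.hom.naturality ρx]
  slice_rhs 6 7 => rw [← Functor.map_comp, Iso.inv_hom_id_app]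
  simp

lemma transpose_lhs
    (hΩδ : ∀ Y : B,
      Ω.hom.app Y ≫ U.map (SS.δ.app Y)
      = CC.δ.app (U.obj Y) ≫ CC.map (Ω.hom.app Y) ≫ Ω.hom.app (SS.obj Y))
    (m : B) (ρx : F.obj (U.obj m) ⟶ SS.obj m) :
    adj.unit.app (U.obj m) ≫ U.map (ρx ≫ SS.δ.app m)
    = (adj.unit.app (U.obj m) ≫ U.map ρx ≫ Ω.inv.app m) ≫
        CC.δ.app (U.obj m) ≫ CC.map (Ω.hom.app m) ≫ Ω.hom.app (SS.obj m) := by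
  have h1 : U.map (SS.δ.app m)
      = Ω.inv.app m ≫ CC.δ.app (U.obj m) ≫ CC.map (Ω.hom.app m) ≫
          Ω.hom.app (SS.obj m) := by
    rw [← hΩδ m, Iso.inv_hom_id_app_assoc]
  rw [U.map_comp, h1]
  simp [Category.assoc]

end Helpers

/-- The assignment `ρ ↦ (Ω⁻¹M)∘(Uρ)∘(ηUM)` is a bijection between right
`χ`-coalgebra structures on `M` and `ℂ`-coalgebra structures on `UM`. -/
theorem rightChiCoalgebra_equiv_CCoalgebra
    (F : A ⥤ B) (U : B ⥤ A) (adj : F ⊣ U)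
    (SS : Comonad B) (CC : Comonad A)
    (Ω : U ⋙ CC.toFunctor ≅ SS.toFunctor ⋙ U)
    -- `Ω` is a lax morphism of comonads
    (hΩδ : ∀ Y : B,
      Ω.hom.app Y ≫ U.map (SS.δ.app Y)
      = CC.δ.app (U.obj Y) ≫ CC.map (Ω.hom.app Y) ≫ Ω.hom.app (SS.obj Y))
    (hΩε : ∀ Y : B, Ω.hom.app Y ≫ U.map (SS.ε.app Y) = CC.ε.app (U.obj Y))
    (M : X ⥤ B) :
    -- (1) the assignment is well defined: for each right `χ`-coalgebra structure `ρ`,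
    -- the family `(Ω⁻¹M)∘(Uρ)∘(ηUM)` is natural and a `ℂ`-coalgebra structure on `UM`;
    (∀ ρ : (M ⋙ U ⋙ F : X ⥤ B) ⟶ (M ⋙ SS.toFunctor : X ⥤ B),
      IsRightChiCoalgebra F U adj SS CC Ω M ρ →
      (∀ (x y : X) (f : x ⟶ y),
        U.map (M.map f) ≫
          (adj.unit.app (U.obj (M.obj y)) ≫ U.map (ρ.app y) ≫ Ω.inv.app (M.obj y))
        = (adj.unit.app (U.obj (M.obj x)) ≫ U.map (ρ.app x) ≫ Ω.inv.app (M.obj x)) ≫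
            CC.map (U.map (M.map f))) ∧
      (∀ x : X,
        (adj.unit.app (U.obj (M.obj x)) ≫ U.map (ρ.app x) ≫ Ω.inv.app (M.obj x)) ≫
            CC.δ.app (U.obj (M.obj x))
        = (adj.unit.app (U.obj (M.obj x)) ≫ U.map (ρ.app x) ≫ Ω.inv.app (M.obj x)) ≫
            CC.map (adj.unit.app (U.obj (M.obj x)) ≫ U.map (ρ.app x) ≫
              Ω.inv.app (M.obj x))) ∧
      (∀ x : X,
        (adj.unit.app (U.obj (M.obj x)) ≫ U.map (ρ.app x) ≫ Ω.inv.app (M.obj x)) ≫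
            CC.ε.app (U.obj (M.obj x))
        = 𝟙 (U.obj (M.obj x)))) ∧
    -- (2) the assignment is bijective: every `ℂ`-coalgebra structure on `UM` arises
    -- from a unique right `χ`-coalgebra structure on `M`.
    (∀ nab : (M ⋙ U : X ⥤ A) ⟶ (M ⋙ U ⋙ CC.toFunctor : X ⥤ A),
      IsCCoalgebra U CC M nab →
      ∃! ρ : (M ⋙ U ⋙ F : X ⥤ B) ⟶ (M ⋙ SS.toFunctor : X ⥤ B),
        IsRightChiCoalgebra F U adj SS CC Ω M ρ ∧
        ∀ x : X,
          nab.app x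
          = adj.unit.app (U.obj (M.obj x)) ≫ U.map (ρ.app x) ≫ Ω.inv.app (M.obj x)) := by
  have hinvε : ∀ m : B, Ω.inv.app m ≫ CC.ε.app (U.obj m) = U.map (SS.ε.app m) := by
    intro m
    rw [← hΩε m, Iso.inv_hom_id_app_assoc]
  constructor
  · -- part (1)
    intro ρ hρ
    refine ⟨?_, ?_, ?_⟩
    · -- naturality
      intro x y f
      have hn : F.map (U.map (M.map f)) ≫ ρ.app y = ρ.app x ≫ SS.map (M.map f) := by
        have := ρ.naturality f
        simpa using this
      calc U.map (M.map f) ≫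
            (adj.unit.app (U.obj (M.obj y)) ≫ U.map (ρ.app y) ≫ Ω.inv.app (M.obj y))
          = adj.unit.app (U.obj (M.obj x)) ≫ U.map (F.map (U.map (M.map f))) ≫
              U.map (ρ.app y) ≫ Ω.inv.app (M.obj y) := by
            erw [Adjunction.unit_naturality_assoc]
        _ = adj.unit.app (U.obj (M.obj x)) ≫ U.map (ρ.app x) ≫
              U.map (SS.map (M.map f)) ≫ Ω.inv.app (M.obj y) := by
            rw [← U.map_comp_assoc, hn, U.map_comp_assoc]
        _ = _ := by
            have := Ω.inv.naturality (M.map f)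
            simp only [Functor.comp_map] at this
            rw [Category.assoc, Category.assoc, this]
    · -- comultiplication
      intro x
      have key := congrArg (fun g => adj.unit.app (U.obj (M.obj x)) ≫ U.map g) (hρ.1 x)
      rw [transpose_lhs F U adj SS CC Ω hΩδ, transpose_rhs F U adj SS CC Ω] at key
      have : Mono (CC.map (Ω.hom.app (M.obj x)) ≫ Ω.hom.app (SS.obj (M.obj x))) := by
        have : IsIso (CC.map (Ω.hom.app (M.obj x)) ≫ Ω.hom.app (SS.obj (M.obj x))) :=
          inferInstance
        infer_instance
      rw [← cancel_mono (CC.map (Ω.hom.app (M.obj x)) ≫ Ω.hom.app (SS.obj (M.obj x)))]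
      simpa only [Category.assoc] using key
    · -- counit
      intro x
      rw [Category.assoc, Category.assoc, hinvε, ← U.map_comp, hρ.2 x]
      exact adj.right_triangle_components (M.obj x)
  · -- part (2)
    intro nab hnab
    -- naturality of the candidate ρ
    have hρnat : ∀ {x y : X} (f : x ⟶ y),
        (M ⋙ U ⋙ F).map f ≫
          (F.map (nab.app y ≫ Ω.hom.app (M.obj y)) ≫ adj.counit.app (SS.obj (M.obj y)))
        = (F.map (nab.app x ≫ Ω.hom.app (M.obj x)) ≫
            adj.counit.app (SS.obj (M.obj x))) ≫ (M ⋙ SS.toFunctor).map f := by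
      intro x y f
      have h1 : U.map (M.map f) ≫ nab.app y = nab.app x ≫ CC.map (U.map (M.map f)) := by
        have := nab.naturality f
        simpa using this
      have h2 : CC.map (U.map (M.map f)) ≫ Ω.hom.app (M.obj y)
          = Ω.hom.app (M.obj x) ≫ U.map (SS.map (M.map f)) := by
        have := Ω.hom.naturality (M.map f)
        simpa using this
      show F.map (U.map (M.map f)) ≫ _ = _ ≫ SS.map (M.map f)
      simp only [Functor.map_comp, Category.assoc]
      rw [← F.map_comp_assoc, h1, F.map_comp_assoc,
        ← F.map_comp_assoc (CC.map (U.map (M.map f))) (Ω.hom.app (M.obj y)), h2,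
        F.map_comp_assoc, Adjunction.counit_naturality]
    set ρ : (M ⋙ U ⋙ F : X ⥤ B) ⟶ (M ⋙ SS.toFunctor : X ⥤ B) :=
      ⟨fun x => F.map (nab.app x ≫ Ω.hom.app (M.obj x)) ≫
        adj.counit.app (SS.obj (M.obj x)), fun {x y} f => hρnat f⟩ with hρdef
    have happ : ∀ x : X, ρ.app x
        = F.map (nab.app x ≫ Ω.hom.app (M.obj x)) ≫
            adj.counit.app (SS.obj (M.obj x)) := fun x => rfl
    have hback : ∀ x : X,
        adj.unit.app (U.obj (M.obj x)) ≫ U.map (ρ.app x) ≫ Ω.inv.app (M.obj x)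
        = nab.app x := by
      intro x
      have h := roundtrip F U adj (nab.app x ≫ Ω.hom.app (M.obj x))
      rw [happ x, ← Category.assoc]
      erw [h]
      simp
    refine ⟨ρ, ⟨⟨?_, ?_⟩, ?_⟩, ?_⟩
    · -- δ condition for ρ
      intro x
      apply transpose_inj F U adj
      rw [transpose_lhs F U adj SS CC Ω hΩδ (M.obj x) (ρ.app x),
        transpose_rhs F U adj SS CC Ω (M.obj x) (ρ.app x), hback x]
      slice_lhs 1 2 => rw [hnab.1 x]
      simp
    · -- ε condition for ρ
      intro x
      rw [happ x, Category.assoc, ← adj.counit_naturality (SS.ε.app (M.obj x)),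
        ← F.map_comp_assoc]
      simp only [Category.assoc]
      rw [hΩε (M.obj x), hnab.2 x]
      simp
    · -- the formula
      intro x
      rw [hback x]
    · -- uniqueness
      intro ρ' ⟨hρ', hfor⟩
      ext x
      apply transpose_inj F U adj
      have h1 : adj.unit.app (U.obj (M.obj x)) ≫ U.map (ρ'.app x)
          = nab.app x ≫ Ω.hom.app (M.obj x) := by
        rw [hfor x]
        simp
      have h2 : adj.unit.app (U.obj (M.obj x)) ≫ U.map (ρ.app x)
          = nab.app x ≫ Ω.hom.app (M.obj x) := by
        rw [← hback x]
        simp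
      rw [h1, h2]

end Stmt9
end

section
/- Let S and V be two lifts (via Ω and Φ respectively) of a comonad ℂ through the adjunction, with associated comonad distributive laws χ^S : TS → ST and χ^V : TV → VT from Theorem 2.7. Then for any functor M : X → B, the Galois map ρ ↦ Γ^{S,V}(ρ), applied componentwise as ρ_x ↦ (εVM x)∘F(Φ_{Mx}∘Ω⁻¹_{Mx})∘(FUρ_x)∘(FηUMx), is a bijection between right χ^S-coalgebra structures TM → SM on M and right χ^V-coalgebra structures TM → VM on M. -/
/-!
STATEMENT 10: Let `S` and `V` be two lifts (via `Ω` and `Φ`) of a comonad `ℂ` through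
an adjunction `F ⊣ U`, with associated comonad distributive laws `χ^S : TS → ST` and
`χ^V : TV → VT`.  For any functor `M : X → B`, the Galois map `ρ ↦ Γ^{S,V}(ρ)`
(applied componentwise) is a bijection between right `χ^S`-coalgebra structures
`TM → SM` and right `χ^V`-coalgebra structures `TM → VM` on `M`.
-/

open CategoryTheory

namespace Stmt10

variable {A B X : Type*} [Category A] [Category B] [Category X]

/-- The mate `Λ : F∘C ⟶ S∘F` of `Ω`, componentwise. -/
def mate (F : A ⥤ B) (U : B ⥤ A) (adj : F ⊣ U) (S : B ⥤ B) (C : A ⥤ A)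
    (Ω : U ⋙ C ≅ S ⋙ U) (X' : A) : F.obj (C.obj X') ⟶ S.obj (F.obj X') :=
  F.map (C.map (adj.unit.app X')) ≫ F.map (Ω.hom.app (F.obj X')) ≫
    adj.counit.app (S.obj (F.obj X'))

/-- `χ := (ΛU) ∘ (FΩ⁻¹) : T∘S ⟶ S∘T`, componentwise. -/
def chi (F : A ⥤ B) (U : B ⥤ A) (adj : F ⊣ U) (S : B ⥤ B) (C : A ⥤ A)
    (Ω : U ⋙ C ≅ S ⋙ U) (Y : B) :
    F.obj (U.obj (S.obj Y)) ⟶ S.obj (F.obj (U.obj Y)) :=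
  F.map (Ω.inv.app Y) ≫ mate F U adj S C Ω (U.obj Y)

/-- The Galois map `Γ^{S,V}_{X,Y}` applied to `f : FX ⟶ SY`. -/
def galois (F : A ⥤ B) (U : B ⥤ A) (adj : F ⊣ U) (S V : B ⥤ B) (C : A ⥤ A)
    (Ω : U ⋙ C ≅ S ⋙ U) (Φ : U ⋙ C ≅ V ⋙ U) (X' : A) (Y : B)
    (f : F.obj X' ⟶ S.obj Y) : F.obj X' ⟶ V.obj Y :=
  F.map (adj.unit.app X') ≫ F.map (U.map f) ≫
    F.map (Ω.inv.app Y ≫ Φ.hom.app Y) ≫ adj.counit.app (V.obj Y)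

section

variable (F : A ⥤ B) (U : B ⥤ A) (adj : F ⊣ U) (SS : Comonad B) (CC : Comonad A)
  (Ω : U ⋙ CC.toFunctor ≅ SS.toFunctor ⋙ U) (M : X ⥤ B)

/-- Right coalgebra conditions over the distributive law determined by a lift. -/
def IsRightCoalgebra (ρ : (M ⋙ U ⋙ F : X ⥤ B) ⟶ (M ⋙ SS.toFunctor : X ⥤ B)) :
    Prop :=
  (∀ x : X,
    ρ.app x ≫ SS.δ.app (M.obj x)
    = F.map (adj.unit.app (U.obj (M.obj x))) ≫ F.map (U.map (ρ.app x)) ≫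
        chi F U adj SS.toFunctor CC.toFunctor Ω (M.obj x) ≫ SS.map (ρ.app x)) ∧
  (∀ x : X, ρ.app x ≫ SS.ε.app (M.obj x) = adj.counit.app (M.obj x))

end

section AuxL
variable (F : A ⥤ B) (U : B ⥤ A) (adj : F ⊣ U) (SS : Comonad B) (CC : Comonad A)
  (Ω : U ⋙ CC.toFunctor ≅ SS.toFunctor ⋙ U)

lemma hom_ext {X' : A} {Y : B} {f g : F.obj X' ⟶ Y}
    (h : adj.unit.app X' ≫ U.map f = adj.unit.app X' ≫ U.map g) : f = g :=
  (adj.homEquiv X' Y).injective (by simpa [Adjunction.homEquiv_unit] using h)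

def sig {Y : B} (r : F.obj (U.obj Y) ⟶ SS.obj Y) : U.obj Y ⟶ CC.obj (U.obj Y) :=
  adj.unit.app _ ≫ U.map r ≫ Ω.inv.app Y

lemma transpose_r {Y : B} (r : F.obj (U.obj Y) ⟶ SS.obj Y) :
    adj.unit.app (U.obj Y) ≫ U.map r = sig F U adj SS CC Ω r ≫ Ω.hom.app Y := by
  simp [sig]

lemma transpose_mate (X' : A) :
    adj.unit.app (CC.obj X') ≫ U.map (mate F U adj SS.toFunctor CC.toFunctor Ω X')
    = CC.map (adj.unit.app X') ≫ Ω.hom.app (F.obj X') := by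
  simp [mate]

lemma transpose_chi (Y : B) :
    adj.unit.app (U.obj (SS.obj Y)) ≫ U.map (chi F U adj SS.toFunctor CC.toFunctor Ω Y)
    = Ω.inv.app Y ≫ CC.map (adj.unit.app (U.obj Y)) ≫ Ω.hom.app (F.obj (U.obj Y)) := by
  simp [chi, mate]

lemma sig_inj {Y : B} (r r' : F.obj (U.obj Y) ⟶ SS.obj Y)
    (h : sig F U adj SS CC Ω r = sig F U adj SS CC Ω r') : r = r' := by
  apply hom_ext F U adj
  rw [transpose_r, transpose_r, h]

lemma sig_recon {Y : B} (s : U.obj Y ⟶ CC.obj (U.obj Y)) :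
    sig F U adj SS CC Ω (F.map (s ≫ Ω.hom.app Y) ≫ adj.counit.app (SS.obj Y)) = s := by
  simp [sig]

lemma eps_iff (hΩε : ∀ Y : B, Ω.hom.app Y ≫ U.map (SS.ε.app Y) = CC.ε.app (U.obj Y))
    {Y : B} (r : F.obj (U.obj Y) ⟶ SS.obj Y) :
    (r ≫ SS.ε.app Y = adj.counit.app Y)
    ↔ sig F U adj SS CC Ω r ≫ CC.ε.app (U.obj Y) = 𝟙 (U.obj Y) := by
  constructor
  · intro h
    have h2 := congrArg (fun t => adj.unit.app (U.obj Y) ≫ U.map t) h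
    simp only [U.map_comp, ← Category.assoc, transpose_r F U adj SS CC Ω r] at h2
    simp only [Category.assoc, hΩε] at h2
    simpa using h2
  · intro h
    apply hom_ext F U adj
    rw [U.map_comp, ← Category.assoc, transpose_r F U adj SS CC Ω r]
    simp only [Category.assoc, hΩε]
    simp [← Category.assoc, h]

lemma delta_iff
    (hΩδ : ∀ Y : B, Ω.hom.app Y ≫ U.map (SS.δ.app Y)
      = CC.δ.app (U.obj Y) ≫ CC.map (Ω.hom.app Y) ≫ Ω.hom.app (SS.obj Y))
    {Y : B} (r : F.obj (U.obj Y) ⟶ SS.obj Y) :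
    (r ≫ SS.δ.app Y
      = F.map (adj.unit.app (U.obj Y)) ≫ F.map (U.map r) ≫
        chi F U adj SS.toFunctor CC.toFunctor Ω Y ≫ SS.map r)
    ↔ (sig F U adj SS CC Ω r ≫ CC.δ.app (U.obj Y)
        = sig F U adj SS CC Ω r ≫ CC.map (sig F U adj SS CC Ω r)) := by
  set s := sig F U adj SS CC Ω r with hs
  have hL : adj.unit.app (U.obj Y) ≫ U.map (r ≫ SS.δ.app Y)
      = s ≫ CC.δ.app (U.obj Y) ≫ CC.map (Ω.hom.app Y) ≫ Ω.hom.app (SS.obj Y) := by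
    rw [U.map_comp, ← Category.assoc, transpose_r F U adj SS CC Ω r]
    simp only [Category.assoc, hΩδ]
    rfl
  have hR : adj.unit.app (U.obj Y) ≫ U.map (F.map (adj.unit.app (U.obj Y)) ≫
        F.map (U.map r) ≫ chi F U adj SS.toFunctor CC.toFunctor Ω Y ≫ SS.map r)
      = s ≫ CC.map s ≫ CC.map (Ω.hom.app Y) ≫ Ω.hom.app (SS.obj Y) := by
    have hu1 : adj.unit.app (U.obj Y) ≫ U.map (F.map (adj.unit.app (U.obj Y)))
        = adj.unit.app (U.obj Y) ≫ adj.unit.app (U.obj (F.obj (U.obj Y))) := by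
      simpa using adj.unit_naturality (adj.unit.app (U.obj Y))
    have hu2 : adj.unit.app (U.obj (F.obj (U.obj Y))) ≫ U.map (F.map (U.map r))
        = U.map r ≫ adj.unit.app (U.obj (SS.obj Y)) := by
      simpa using adj.unit_naturality (U.map r)
    have hΩn : CC.map (U.map r) ≫ Ω.hom.app (SS.obj Y)
        = Ω.hom.app (F.obj (U.obj Y)) ≫ U.map (SS.map r) := by
      simpa using Ω.hom.naturality r
    simp only [U.map_comp]
    rw [reassoc_of% hu1, reassoc_of% hu2, reassoc_of% (transpose_chi F U adj SS CC Ω Y)]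
    rw [← hΩn]
    -- now: η ≫ U r ≫ Ω⁻¹ ≫ C η ≫ C (U r) ≫ Ω_{S Y} = s ≫ C s ≫ C Ω ≫ Ω_{S Y}
    rw [hs]
    simp only [sig, Category.assoc]
    simp only [← CC.toFunctor.map_comp, ← Category.assoc]
    congr 2
    simp only [Category.assoc]
    congr 1
    simp
  constructor
  · intro h
    have h2 := congrArg (fun t => adj.unit.app (U.obj Y) ≫ U.map t) h
    rw [hL, hR] at h2
    simp only [← Category.assoc] at h2
    have h3 := (cancel_mono (Ω.hom.app (SS.obj Y))).mp h2
    have h4 := (cancel_mono (CC.toFunctor.map (Ω.hom.app Y))).mp h3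
    simpa [Category.assoc] using h4
  · intro h
    apply hom_ext F U adj
    rw [hL, hR, ← Category.assoc, ← Category.assoc, h]
    simp only [Category.assoc]

end AuxL

section Two
variable (F : A ⥤ B) (U : B ⥤ A) (adj : F ⊣ U) (SS VV : Comonad B) (CC : Comonad A)
  (Ω : U ⋙ CC.toFunctor ≅ SS.toFunctor ⋙ U) (Φ : U ⋙ CC.toFunctor ≅ VV.toFunctor ⋙ U)

lemma transpose_galois {X' : A} {Y : B} (f : F.obj X' ⟶ SS.obj Y) :
    adj.unit.app X' ≫
      U.map (galois F U adj SS.toFunctor VV.toFunctor CC.toFunctor Ω Φ X' Y f)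
    = adj.unit.app X' ≫ U.map f ≫ Ω.inv.app Y ≫ Φ.hom.app Y := by
  simp [galois]

lemma sig_galois {Y : B} (f : F.obj (U.obj Y) ⟶ SS.obj Y) :
    sig F U adj VV CC Φ
      (galois F U adj SS.toFunctor VV.toFunctor CC.toFunctor Ω Φ (U.obj Y) Y f)
    = sig F U adj SS CC Ω f := by
  simp only [sig, ← Category.assoc]
  rw [transpose_galois F U adj SS VV CC Ω Φ f]
  simp [Category.assoc]

lemma galois_eq {Y : B} (f : F.obj (U.obj Y) ⟶ SS.obj Y) :
    galois F U adj SS.toFunctor VV.toFunctor CC.toFunctor Ω Φ (U.obj Y) Y f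
    = F.map (sig F U adj SS CC Ω f ≫ Φ.hom.app Y) ≫ adj.counit.app (VV.obj Y) := by
  apply hom_ext F U adj
  rw [transpose_galois F U adj SS VV CC Ω Φ f]
  simp [sig]

lemma sig_natural (M : X ⥤ B)
    (ρ : (M ⋙ U ⋙ F : X ⥤ B) ⟶ (M ⋙ SS.toFunctor : X ⥤ B)) {x y : X} (f : x ⟶ y) :
    U.map (M.map f) ≫ sig F U adj SS CC Ω (ρ.app y)
    = sig F U adj SS CC Ω (ρ.app x) ≫ CC.map (U.map (M.map f)) := by
  have hnat : F.map (U.map (M.map f)) ≫ ρ.app y = ρ.app x ≫ SS.map (M.map f) := by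
    simpa using ρ.naturality f
  have h1 : U.map (M.map f) ≫ adj.unit.app (U.obj (M.obj y))
      = adj.unit.app (U.obj (M.obj x)) ≫ U.map (F.map (U.map (M.map f))) := by
    simpa using (adj.unit_naturality (U.map (M.map f))).symm
  have h2 : U.map (SS.map (M.map f)) ≫ Ω.inv.app (M.obj y)
      = Ω.inv.app (M.obj x) ≫ CC.map (U.map (M.map f)) := by
    simpa using Ω.inv.naturality (M.map f)
  simp only [sig]
  rw [reassoc_of% h1, ← U.map_comp_assoc, hnat, U.map_comp_assoc, h2]
  simp only [Category.assoc]

end Two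


section Main

variable (F : A ⥤ B) (U : B ⥤ A) (adj : F ⊣ U) (SS VV : Comonad B) (CC : Comonad A)
  (Ω : U ⋙ CC.toFunctor ≅ SS.toFunctor ⋙ U) (Φ : U ⋙ CC.toFunctor ≅ VV.toFunctor ⋙ U)
  (M : X ⥤ B)

/-- Naturality square for the "galois'ed" components. -/
lemma galois_natural (σ : ∀ x : X, U.obj (M.obj x) ⟶ CC.obj (U.obj (M.obj x)))
    (hσ : ∀ {x y : X} (f : x ⟶ y),
      U.map (M.map f) ≫ σ y = σ x ≫ CC.map (U.map (M.map f)))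
    {x y : X} (f : x ⟶ y) :
    F.map (U.map (M.map f)) ≫
      (F.map (σ y ≫ Ω.hom.app (M.obj y)) ≫ adj.counit.app (SS.obj (M.obj y)))
    = (F.map (σ x ≫ Ω.hom.app (M.obj x)) ≫ adj.counit.app (SS.obj (M.obj x))) ≫
        SS.map (M.map f) := by
  have hΩn : CC.map (U.map (M.map f)) ≫ Ω.hom.app (M.obj y)
      = Ω.hom.app (M.obj x) ≫ U.map (SS.map (M.map f)) := by
    simpa using Ω.hom.naturality (M.map f)
  have key : U.map (M.map f) ≫ σ y ≫ Ω.hom.app (M.obj y)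
      = (σ x ≫ Ω.hom.app (M.obj x)) ≫ U.map (SS.map (M.map f)) := by
    rw [← Category.assoc, hσ f, Category.assoc, hΩn, Category.assoc]
  rw [← F.map_comp_assoc, key, F.map_comp, Category.assoc, adj.counit_naturality (SS.map (M.map f)),
    F.map_comp, Category.assoc, Category.assoc]
  simp only [Category.assoc]

end Main

/-- The componentwise Galois map is a bijection between right `χ^S`-coalgebra
structures and right `χ^V`-coalgebra structures on `M`. -/
theorem galois_bijection_on_coalgebras
    (F : A ⥤ B) (U : B ⥤ A) (adj : F ⊣ U)
    (SS VV : Comonad B) (CC : Comonad A)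
    (Ω : U ⋙ CC.toFunctor ≅ SS.toFunctor ⋙ U)
    (Φ : U ⋙ CC.toFunctor ≅ VV.toFunctor ⋙ U)
    -- `Ω` and `Φ` are lax morphisms of comonads
    (hΩδ : ∀ Y : B,
      Ω.hom.app Y ≫ U.map (SS.δ.app Y)
      = CC.δ.app (U.obj Y) ≫ CC.map (Ω.hom.app Y) ≫ Ω.hom.app (SS.obj Y))
    (hΩε : ∀ Y : B, Ω.hom.app Y ≫ U.map (SS.ε.app Y) = CC.ε.app (U.obj Y))
    (hΦδ : ∀ Y : B,
      Φ.hom.app Y ≫ U.map (VV.δ.app Y)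
      = CC.δ.app (U.obj Y) ≫ CC.map (Φ.hom.app Y) ≫ Φ.hom.app (VV.obj Y))
    (hΦε : ∀ Y : B, Φ.hom.app Y ≫ U.map (VV.ε.app Y) = CC.ε.app (U.obj Y))
    (M : X ⥤ B) :
    -- (1) for each right `χ^S`-coalgebra structure `ρ`, the componentwise Galois image
    -- is natural and a right `χ^V`-coalgebra structure on `M`;
    (∀ ρ : (M ⋙ U ⋙ F : X ⥤ B) ⟶ (M ⋙ SS.toFunctor : X ⥤ B),
      IsRightCoalgebra F U adj SS CC Ω M ρ →
      (∀ (x y : X) (f : x ⟶ y),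
        F.map (U.map (M.map f)) ≫
          galois F U adj SS.toFunctor VV.toFunctor CC.toFunctor Ω Φ
            (U.obj (M.obj y)) (M.obj y) (ρ.app y)
        = galois F U adj SS.toFunctor VV.toFunctor CC.toFunctor Ω Φ
            (U.obj (M.obj x)) (M.obj x) (ρ.app x) ≫ VV.map (M.map f)) ∧
      (∀ x : X,
        galois F U adj SS.toFunctor VV.toFunctor CC.toFunctor Ω Φ
            (U.obj (M.obj x)) (M.obj x) (ρ.app x) ≫ VV.δ.app (M.obj x)
        = F.map (adj.unit.app (U.obj (M.obj x))) ≫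
            F.map (U.map (galois F U adj SS.toFunctor VV.toFunctor CC.toFunctor Ω Φ
              (U.obj (M.obj x)) (M.obj x) (ρ.app x))) ≫
            chi F U adj VV.toFunctor CC.toFunctor Φ (M.obj x) ≫
            VV.map (galois F U adj SS.toFunctor VV.toFunctor CC.toFunctor Ω Φ
              (U.obj (M.obj x)) (M.obj x) (ρ.app x))) ∧
      (∀ x : X,
        galois F U adj SS.toFunctor VV.toFunctor CC.toFunctor Ω Φ
            (U.obj (M.obj x)) (M.obj x) (ρ.app x) ≫ VV.ε.app (M.obj x)
        = adj.counit.app (M.obj x))) ∧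
    -- (2) every right `χ^V`-coalgebra structure arises from a unique right
    -- `χ^S`-coalgebra structure under the componentwise Galois map.
    (∀ ρ' : (M ⋙ U ⋙ F : X ⥤ B) ⟶ (M ⋙ VV.toFunctor : X ⥤ B),
      IsRightCoalgebra F U adj VV CC Φ M ρ' →
      ∃! ρ : (M ⋙ U ⋙ F : X ⥤ B) ⟶ (M ⋙ SS.toFunctor : X ⥤ B),
        IsRightCoalgebra F U adj SS CC Ω M ρ ∧
        ∀ x : X,
          ρ'.app x
          = galois F U adj SS.toFunctor VV.toFunctor CC.toFunctor Ω Φ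
              (U.obj (M.obj x)) (M.obj x) (ρ.app x)) := by
  constructor
  · -- (1) the pointwise Galois image of a right `χ^S`-coalgebra
    intro ρ hρ
    obtain ⟨hδ, hε⟩ := hρ
    refine ⟨?_, ?_, ?_⟩
    · -- naturality
      intro x y f
      rw [galois_eq F U adj SS VV CC Ω Φ, galois_eq F U adj SS VV CC Ω Φ]
      exact galois_natural F U adj VV CC Φ M
        (fun x => sig F U adj SS CC Ω (ρ.app x))
        (fun {x y} f => sig_natural F U adj SS CC Ω M ρ f) f
    · -- comultiplication condition
      intro x
      refine (delta_iff F U adj VV CC Φ hΦδ _).mpr ?_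
      rw [sig_galois F U adj SS VV CC Ω Φ]
      exact (delta_iff F U adj SS CC Ω hΩδ (ρ.app x)).mp (hδ x)
    · -- counit condition
      intro x
      refine (eps_iff F U adj VV CC Φ hΦε _).mpr ?_
      rw [sig_galois F U adj SS VV CC Ω Φ]
      exact (eps_iff F U adj SS CC Ω hΩε (ρ.app x)).mp (hε x)
  · -- (2) existence and uniqueness of the preimage
    intro ρ' hρ'
    obtain ⟨hδ', hε'⟩ := hρ'
    refine ⟨{ app := fun x =>
              F.map (sig F U adj VV CC Φ (ρ'.app x) ≫ Ω.hom.app (M.obj x)) ≫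
                adj.counit.app (SS.obj (M.obj x)),
              naturality := fun x y f => galois_natural F U adj SS CC Ω M
                (fun x => sig F U adj VV CC Φ (ρ'.app x))
                (fun {x y} f => sig_natural F U adj VV CC Φ M ρ' f) f },
      ⟨⟨?_, ?_⟩, ?_⟩, ?_⟩
    · -- comultiplication condition for the preimage
      intro x
      refine (delta_iff F U adj SS CC Ω hΩδ _).mpr ?_
      rw [sig_recon F U adj SS CC Ω]
      have h := (delta_iff F U adj VV CC Φ hΦδ (ρ'.app x)).mp (hδ' x)
      rw [h]
    · -- counit condition for the preimage
      intro x
      refine (eps_iff F U adj SS CC Ω hΩε _).mpr ?_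
      rw [sig_recon F U adj SS CC Ω]
      exact (eps_iff F U adj VV CC Φ hΦε (ρ'.app x)).mp (hε' x)
    · -- the Galois image of the preimage is `ρ'`
      intro x
      rw [galois_eq F U adj SS VV CC Ω Φ, sig_recon F U adj SS CC Ω]
      apply hom_ext F U adj
      simp [sig]
    · -- uniqueness
      rintro ρ₂ ⟨_, hg⟩
      ext x
      apply sig_inj F U adj SS CC Ω
      have h := congrArg (sig F U adj VV CC Φ) (hg x)
      rw [sig_galois F U adj SS VV CC Ω Φ] at h
      rw [← h, sig_recon F U adj SS CC Ω]


end Stmt10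
end

section
/- Let ∇ : M → SM be an 𝕊-coalgebra structure on a functor M : X → B. Then the functor UM : X → A, equipped with the 𝔹-algebra structure β := UεM : BUM → UM and the ℂ-coalgebra structure ∇' := (Ω⁻¹M)∘(U∇) : UM → CUM, is an entwined algebra with respect to θ; that is, β satisfies the algebra axioms, ∇' satisfies the coalgebra axioms, and (C β)∘(θ UM)∘(B ∇') = ∇' ∘ β. -/
/-!
STATEMENT 13: In the setting of an adjunction `F ⊣ U`, comonads `ℂ` on `A` and `𝕊` on `B`
with a lax isomorphism `Ω : C∘U ≅ U∘S`, and the resulting mixed distributive law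
`θ := (Ω⁻¹F)∘(UΛ) : BC → CB`, let `∇ : M → SM` be an `𝕊`-coalgebra structure on
`M : X → B`.  Then `UM : X → A` together with `β := UεM : BUM → UM` and
`∇' := (Ω⁻¹M)∘(U∇) : UM → CUM` is an entwined algebra with respect to `θ`.
-/

open CategoryTheory

namespace Stmt13

variable {A B X : Type*} [Category A] [Category B] [Category X]

/-- The mate `Λ : F∘C ⟶ S∘F` of `Ω`, componentwise. -/
def mate (F : A ⥤ B) (U : B ⥤ A) (adj : F ⊣ U) (S : B ⥤ B) (C : A ⥤ A)
    (Ω : U ⋙ C ≅ S ⋙ U) (X' : A) : F.obj (C.obj X') ⟶ S.obj (F.obj X') :=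
  F.map (C.map (adj.unit.app X')) ≫ F.map (Ω.hom.app (F.obj X')) ≫
    adj.counit.app (S.obj (F.obj X'))

/-- `θ := (Ω⁻¹F) ∘ (UΛ) : B∘C ⟶ C∘B`, componentwise. -/
def theta (F : A ⥤ B) (U : B ⥤ A) (adj : F ⊣ U) (S : B ⥤ B) (C : A ⥤ A)
    (Ω : U ⋙ C ≅ S ⋙ U) (X' : A) :
    U.obj (F.obj (C.obj X')) ⟶ C.obj (U.obj (F.obj X')) :=
  U.map (mate F U adj S C Ω X') ≫ Ω.inv.app (F.obj X')

theorem UM_entwined_algebra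
    (F : A ⥤ B) (U : B ⥤ A) (adj : F ⊣ U)
    (SS : Comonad B) (CC : Comonad A)
    (Ω : U ⋙ CC.toFunctor ≅ SS.toFunctor ⋙ U)
    -- `Ω` is a lax morphism of comonads
    (hΩδ : ∀ Y : B,
      Ω.hom.app Y ≫ U.map (SS.δ.app Y)
      = CC.δ.app (U.obj Y) ≫ CC.map (Ω.hom.app Y) ≫ Ω.hom.app (SS.obj Y))
    (hΩε : ∀ Y : B, Ω.hom.app Y ≫ U.map (SS.ε.app Y) = CC.ε.app (U.obj Y))
    (M : X ⥤ B)
    -- `∇` is an `𝕊`-coalgebra structure on `M`: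
    (nab : (M : X ⥤ B) ⟶ (M ⋙ SS.toFunctor : X ⥤ B))
    (hcoassoc : ∀ x : X,
      nab.app x ≫ SS.δ.app (M.obj x) = nab.app x ≫ SS.map (nab.app x))
    (hcounit : ∀ x : X, nab.app x ≫ SS.ε.app (M.obj x) = 𝟙 (M.obj x)) :
    -- `β := UεM` is a `𝔹`-algebra structure on `UM`:
    (∀ x : X,
      U.map (adj.counit.app (F.obj (U.obj (M.obj x)))) ≫
        U.map (adj.counit.app (M.obj x))
      = U.map (F.map (U.map (adj.counit.app (M.obj x)))) ≫
          U.map (adj.counit.app (M.obj x))) ∧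
    (∀ x : X,
      adj.unit.app (U.obj (M.obj x)) ≫ U.map (adj.counit.app (M.obj x))
      = 𝟙 (U.obj (M.obj x))) ∧
    -- `∇' := (Ω⁻¹M)∘(U∇)` is a `ℂ`-coalgebra structure on `UM`:
    (∀ x : X,
      (U.map (nab.app x) ≫ Ω.inv.app (M.obj x)) ≫ CC.δ.app (U.obj (M.obj x))
      = (U.map (nab.app x) ≫ Ω.inv.app (M.obj x)) ≫
          CC.map (U.map (nab.app x) ≫ Ω.inv.app (M.obj x))) ∧
    (∀ x : X,
      (U.map (nab.app x) ≫ Ω.inv.app (M.obj x)) ≫ CC.ε.app (U.obj (M.obj x))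
      = 𝟙 (U.obj (M.obj x))) ∧
    -- the entwining condition `(Cβ)∘(θUM)∘(B∇') = ∇'∘β`:
    (∀ x : X,
      U.map (F.map (U.map (nab.app x) ≫ Ω.inv.app (M.obj x))) ≫
        theta F U adj SS.toFunctor CC.toFunctor Ω (U.obj (M.obj x)) ≫
        CC.map (U.map (adj.counit.app (M.obj x)))
      = U.map (adj.counit.app (M.obj x)) ≫
          (U.map (nab.app x) ≫ Ω.inv.app (M.obj x))) := by
  -- inverse form of the comultiplication compatibility
  have hinvδ : ∀ Y : B, Ω.inv.app Y ≫ CC.δ.app (U.obj Y)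
      = U.map (SS.δ.app Y) ≫ Ω.inv.app (SS.obj Y) ≫
          CC.map (Ω.inv.app Y) := by
    intro Y
    have hδ : CC.δ.app (U.obj Y)
        = Ω.hom.app Y ≫ U.map (SS.δ.app Y) ≫ Ω.inv.app (SS.obj Y) ≫
            CC.map (Ω.inv.app Y) := by
      rw [reassoc_of% (hΩδ Y)]
      slice_rhs 3 4 => rw [Iso.hom_inv_id_app]
      simp [← CC.toFunctor.map_comp]
    rw [hδ]
    slice_lhs 1 2 => rw [Iso.inv_hom_id_app]
    simp
  -- inverse form of the counit compatibility
  have hinvε : ∀ Y : B, Ω.inv.app Y ≫ CC.ε.app (U.obj Y)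
      = U.map (SS.ε.app Y) := by
    intro Y
    rw [← hΩε Y]
    slice_lhs 1 2 => rw [Iso.inv_hom_id_app]
    simp
  -- naturality of Ω.inv in usable component form
  have hnat : ∀ {Y Z : B} (f : Y ⟶ Z),
      U.map (SS.map f) ≫ Ω.inv.app Z = Ω.inv.app Y ≫ CC.map (U.map f) := by
    intro Y Z f
    simpa using Ω.inv.naturality f
  refine ⟨?_, ?_, ?_, ?_, ?_⟩
  · intro x
    rw [← U.map_comp, ← U.map_comp]
    congr 1
    simpa using (adj.counit.naturality (adj.counit.app (M.obj x))).symm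
  · intro x
    exact adj.right_triangle_components _
  · intro x
    rw [Category.assoc, hinvδ]
    rw [← Category.assoc, ← U.map_comp, hcoassoc x, U.map_comp]
    have h2 := hnat (nab.app x)
    simp only [Functor.comp_obj] at h2
    slice_lhs 2 3 => rw [h2]
    simp
  · intro x
    rw [Category.assoc, hinvε, ← U.map_comp, hcounit x, U.map_id]
  · intro x
    -- key identity in B
    have key : F.map (U.map (nab.app x) ≫ Ω.inv.app (M.obj x)) ≫
        (F.map (CC.map (adj.unit.app (U.obj (M.obj x)))) ≫
          F.map (Ω.hom.app (F.obj (U.obj (M.obj x)))) ≫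
          adj.counit.app (SS.obj (F.obj (U.obj (M.obj x))))) ≫
        SS.map (adj.counit.app (M.obj x))
        = adj.counit.app (M.obj x) ≫ nab.app x := by
      have hstep : Ω.inv.app (M.obj x) ≫
          CC.map (adj.unit.app (U.obj (M.obj x))) ≫
          Ω.hom.app (F.obj (U.obj (M.obj x))) ≫
          U.map (SS.map (adj.counit.app (M.obj x)))
          = 𝟙 (U.obj (SS.obj (M.obj x))) := by
        have := Ω.hom.naturality (adj.counit.app (M.obj x))
        simp only [Functor.comp_map, Functor.comp_obj, Functor.id_obj,
          Functor.id_map] at this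
        slice_lhs 3 4 => rw [← this]
        slice_lhs 2 3 =>
          rw [← Functor.map_comp, adj.right_triangle_components]
        simp
      calc F.map (U.map (nab.app x) ≫ Ω.inv.app (M.obj x)) ≫
              (F.map (CC.map (adj.unit.app (U.obj (M.obj x)))) ≫
                F.map (Ω.hom.app (F.obj (U.obj (M.obj x)))) ≫
                adj.counit.app (SS.obj (F.obj (U.obj (M.obj x))))) ≫
              SS.map (adj.counit.app (M.obj x))
          = F.map (U.map (nab.app x)) ≫
              F.map (Ω.inv.app (M.obj x) ≫
                CC.map (adj.unit.app (U.obj (M.obj x))) ≫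
                Ω.hom.app (F.obj (U.obj (M.obj x))) ≫
                U.map (SS.map (adj.counit.app (M.obj x)))) ≫
              adj.counit.app (SS.obj (M.obj x)) := by
            simp only [F.map_comp, Category.assoc]
            congr 3
            have := adj.counit.naturality (SS.map (adj.counit.app (M.obj x)))
            simp only [Functor.comp_map, Functor.id_map] at this
            simp [this]
        _ = F.map (U.map (nab.app x)) ≫ adj.counit.app (SS.obj (M.obj x)) := by
            rw [hstep]; simp
        _ = adj.counit.app (M.obj x) ≫ nab.app x := by
            have := adj.counit.naturality (nab.app x)
            simpa using this
    -- now reduce the goal to `key`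
    have e := congrArg U.map key
    have hnat' := hnat (adj.counit.app (M.obj x))
    simp only [Functor.comp_obj, Functor.id_obj] at hnat'
    simp only [theta, mate, Functor.map_comp, Category.assoc] at e ⊢
    rw [← hnat', reassoc_of% e]

end Stmt13
end

section
/- The operators t_n := (λT^n M)∘(Nχ^n M)∘(NT^n ρ) : N T^{n+1} M → N T^{n+1} M make the simplicial functor CC_𝕋(N,M) duplicial; that is, for all n: d_i ∘ t_n = t_{n-1} ∘ d_{i-1} for 1 ≤ i ≤ n, d_0 ∘ t_n = d_n, s_j ∘ t_n = t_{n+1} ∘ s_{j-1} for 1 ≤ j ≤ n, and s_0 ∘ t_n = t_{n+1} ∘ t_{n+1} ∘ s_n. Dually, the operators t'_n := (NS^n ρ)∘(Nχ̂^n M)∘(λ S^n M) make CC_𝕊^op(N,M) duplicial. -/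
/-!
STATEMENT 14: Let `χ : TS → ST` be a comonad distributive law, `(M, ρ)` a right
`χ`-coalgebra and `(N, λ)` a left `χ`-coalgebra.  The operators
`t_n := (λT^n M)∘(Nχ^n M)∘(NT^n ρ)` make the simplicial functor `CC_𝕋(N,M)`
(with faces `d_i = NT^iε^T T^{n-i}M` and degeneracies `s_j = NT^jΔ^T T^{n-j}M`)
duplicial, and dually the operators `t'_n := (NS^n ρ)∘(Nχ̂^n M)∘(λS^n M)` make
`CC_𝕊^op(N,M)` (with faces `d_i = NS^{n-i}ε^S S^iM` and degeneracies
`s_j = NS^{n-j}Δ^S S^jM`) duplicial.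
-/

open CategoryTheory

namespace Stmt14

variable {B X Y : Type*} [Category B] [Category X] [Category Y]

/-- Iterated application of an endofunctor. -/
def iter (G : B ⥤ B) : ℕ → B → B
  | 0, Z => Z
  | n + 1, Z => G.obj (iter G n Z)

/-- `T^i ε^T T^{n-i}` at `Z` (for `0 ≤ i ≤ n`), the `i`-th face operator
of the bar resolution (before applying `N` and evaluating at `M`). -/
def dmor (T : Comonad B) : (n i : ℕ) → (Z : B) →
    (iter T.toFunctor (n + 1) Z ⟶ iter T.toFunctor n Z)
  | n, 0, Z => T.ε.app (iter T.toFunctor n Z)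
  | 0, _ + 1, Z => T.ε.app Z
  | n + 1, i + 1, Z => T.map (dmor T n i Z)

/-- `T^j Δ^T T^{n-j}` at `Z` (for `0 ≤ j ≤ n`), the `j`-th degeneracy operator
of the bar resolution. -/
def smor (T : Comonad B) : (n j : ℕ) → (Z : B) →
    (iter T.toFunctor (n + 1) Z ⟶ iter T.toFunctor (n + 2) Z)
  | n, 0, Z => T.δ.app (iter T.toFunctor n Z)
  | 0, _ + 1, Z => T.δ.app Z
  | n + 1, j + 1, Z => T.map (smor T n j Z)

/-- The composite `(χ^n M) ∘ (T^n ρ) : T^{n+1}M ⟶ ST^nM` (componentwise),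
where `χ^n : T^nS → ST^n` is obtained by repeated application of `χ`. -/
def gmap (T S : Comonad B)
    (χ : (S.toFunctor ⋙ T.toFunctor : B ⥤ B) ⟶ (T.toFunctor ⋙ S.toFunctor : B ⥤ B))
    (M : X ⥤ B) (ρ : (M ⋙ T.toFunctor : X ⥤ B) ⟶ (M ⋙ S.toFunctor : X ⥤ B))
    (x : X) : (n : ℕ) →
    (iter T.toFunctor (n + 1) (M.obj x) ⟶ S.obj (iter T.toFunctor n (M.obj x)))
  | 0 => ρ.app x
  | n + 1 => T.map (gmap T S χ M ρ x n) ≫ χ.app (iter T.toFunctor n (M.obj x))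

/-- The composite `(S^n ρ) ∘ (χ̂^n M) : TS^nM ⟶ S^{n+1}M` (componentwise),
where `χ̂^n : TS^n → S^nT` is obtained by repeated application of `χ`. -/
def hmap (T S : Comonad B)
    (χ : (S.toFunctor ⋙ T.toFunctor : B ⥤ B) ⟶ (T.toFunctor ⋙ S.toFunctor : B ⥤ B))
    (M : X ⥤ B) (ρ : (M ⋙ T.toFunctor : X ⥤ B) ⟶ (M ⋙ S.toFunctor : X ⥤ B))
    (x : X) : (n : ℕ) →
    (T.obj (iter S.toFunctor n (M.obj x)) ⟶ iter S.toFunctor (n + 1) (M.obj x))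
  | 0 => ρ.app x
  | n + 1 => χ.app (iter S.toFunctor n (M.obj x)) ≫ S.map (hmap T S χ M ρ x n)

section Aux

variable (T S : Comonad B)
    (χ : (S.toFunctor ⋙ T.toFunctor : B ⥤ B) ⟶ (T.toFunctor ⋙ S.toFunctor : B ⥤ B))
    (M : X ⥤ B) (ρ : (M ⋙ T.toFunctor : X ⥤ B) ⟶ (M ⋙ S.toFunctor : X ⥤ B))
    (x : X)

lemma dmor_zero (T : Comonad B) (n : ℕ) (Z : B) :
    dmor T n 0 Z = T.ε.app (iter T.toFunctor n Z) := by cases n <;> rfl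

lemma dmor_succ (T : Comonad B) (n i : ℕ) (Z : B) :
    dmor T (n + 1) (i + 1) Z = T.map (dmor T n i Z) := rfl

lemma smor_zero (T : Comonad B) (n : ℕ) (Z : B) :
    smor T n 0 Z = T.δ.app (iter T.toFunctor n Z) := by cases n <;> rfl

lemma smor_succ (T : Comonad B) (n j : ℕ) (Z : B) :
    smor T (n + 1) (j + 1) Z = T.map (smor T n j Z) := rfl

lemma gmap_succ (n : ℕ) :
    gmap T S χ M ρ x (n + 1)
      = T.map (gmap T S χ M ρ x n) ≫ χ.app (iter T.toFunctor n (M.obj x)) := rfl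

lemma cnat {A A' : B} (f : A ⟶ A') :
    T.map (S.map f) ≫ χ.app A' = χ.app A ≫ S.map (T.map f) := χ.naturality f

lemma enat (T : Comonad B) {A A' : B} (f : A ⟶ A') :
    T.map f ≫ T.ε.app A' = T.ε.app A ≫ f := T.ε.naturality f

lemma dnat (T : Comonad B) {A A' : B} (f : A ⟶ A') :
    T.map f ≫ T.δ.app A' = T.δ.app A ≫ T.map (T.map f) := T.δ.naturality f

/-- Lemma B: `g n ≫ Sε = dmor T n n`. -/
lemma gmap_eps
    (h2 : ∀ Z : B, χ.app Z ≫ S.ε.app (T.obj Z) = T.map (S.ε.app Z))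
    (hρ2 : ρ.app x ≫ S.ε.app (M.obj x) = T.ε.app (M.obj x)) :
    ∀ n, gmap T S χ M ρ x n ≫ S.ε.app (iter T.toFunctor n (M.obj x))
      = dmor T n n (M.obj x)
  | 0 => hρ2
  | n + 1 => by
    erw [gmap_succ, dmor_succ, Category.assoc]
    erw [show S.ε.app (iter T.toFunctor (n+1) (M.obj x))
        = S.ε.app (T.obj (iter T.toFunctor n (M.obj x))) from rfl, h2,
      ← Functor.map_comp, gmap_eps h2 hρ2 n]

/-- Lemma A, case k = 0. -/
lemma gmap_d0
    (h1 : ∀ Z : B, χ.app Z ≫ S.map (T.ε.app Z) = T.ε.app (S.obj Z)) (n : ℕ) :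
    gmap T S χ M ρ x (n + 1) ≫ S.map (dmor T n 0 (M.obj x))
      = dmor T (n + 1) 0 (M.obj x) ≫ gmap T S χ M ρ x n := by
  erw [gmap_succ, dmor_zero, dmor_zero, Category.assoc, h1,
    show T.ε.app (iter T.toFunctor (n+1) (M.obj x))
      = T.ε.app (T.obj (iter T.toFunctor n (M.obj x))) from rfl]
  exact enat T (gmap T S χ M ρ x n)

/-- Lemma A: `g(n+1) ≫ S(d_k) = d_k ≫ g n` for `k ≤ n`. -/
lemma gmap_dmor
    (h1 : ∀ Z : B, χ.app Z ≫ S.map (T.ε.app Z) = T.ε.app (S.obj Z)) :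
    ∀ n k, k ≤ n →
      gmap T S χ M ρ x (n + 1) ≫ S.map (dmor T n k (M.obj x))
        = dmor T (n + 1) k (M.obj x) ≫ gmap T S χ M ρ x n := by
  intro n
  induction n with
  | zero =>
    intro k hk
    obtain rfl : k = 0 := Nat.le_zero.mp hk
    exact gmap_d0 T S χ M ρ x h1 0
  | succ m ih =>
    intro k hk
    match k with
    | 0 => exact gmap_d0 T S χ M ρ x h1 (m + 1)
    | k + 1 =>
      have hkm : k ≤ m := Nat.succ_le_succ_iff.mp hk
      erw [gmap_succ, dmor_succ, dmor_succ, Category.assoc,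
        ← cnat T S χ (dmor T m k (M.obj x)), ← Category.assoc,
        ← Functor.map_comp, ih k hkm, Functor.map_comp, Category.assoc,
        ← gmap_succ]
      rfl

/-- Lemma C: `g(m+1) ≫ S(s_k) = s_k ≫ g(m+2)` for `k ≤ m`. -/
lemma gmap_smor
    (h3 : ∀ Z : B, χ.app Z ≫ S.map (T.δ.app Z)
            = T.δ.app (S.obj Z) ≫ T.map (χ.app Z) ≫ χ.app (T.obj Z)) :
    ∀ m k, k ≤ m →
      gmap T S χ M ρ x (m + 1) ≫ S.map (smor T m k (M.obj x))
        = smor T (m + 1) k (M.obj x) ≫ gmap T S χ M ρ x (m + 2) := by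
  have base : ∀ m : ℕ,
      gmap T S χ M ρ x (m + 1) ≫ S.map (smor T m 0 (M.obj x))
        = smor T (m + 1) 0 (M.obj x) ≫ gmap T S χ M ρ x (m + 2) := by
    intro m
    simp only [gmap_succ, smor_zero, iter, Functor.map_comp, Category.assoc]
    erw [h3, reassoc_of% (dnat T (gmap T S χ M ρ x m))]
    rfl
  intro m
  induction m with
  | zero =>
    intro k hk
    obtain rfl : k = 0 := Nat.le_zero.mp hk
    exact base 0
  | succ p ih =>
    intro k hk
    match k with
    | 0 => exact base (p + 1)
    | k + 1 =>
      have hkp : k ≤ p := Nat.succ_le_succ_iff.mp hk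
      erw [gmap_succ, smor_succ, smor_succ, Category.assoc,
        ← cnat T S χ (smor T p k (M.obj x)), ← Category.assoc,
        ← Functor.map_comp, ih k hkp, Functor.map_comp, Category.assoc,
        ← gmap_succ]
      rfl

/-- Lemma D: `s_n ≫ g(n+1) ≫ S(g n) = g n ≫ δˢ`. -/
lemma gmap_delta
    (h4 : ∀ Z : B, χ.app Z ≫ S.δ.app (T.obj Z)
            = T.map (S.δ.app Z) ≫ χ.app (S.obj Z) ≫ S.map (χ.app Z))
    (hρ1 : ρ.app x ≫ S.δ.app (M.obj x)
      = T.δ.app (M.obj x) ≫ T.map (ρ.app x) ≫ χ.app (M.obj x) ≫ S.map (ρ.app x)) :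
    ∀ n, smor T n n (M.obj x) ≫ gmap T S χ M ρ x (n + 1) ≫
        S.map (gmap T S χ M ρ x n)
      = gmap T S χ M ρ x n ≫ S.δ.app (iter T.toFunctor n (M.obj x)) := by
  intro n
  induction n with
  | zero =>
    show T.δ.app _ ≫ (T.map (ρ.app x) ≫ χ.app _) ≫ S.map (ρ.app x)
      = ρ.app x ≫ S.δ.app (M.obj x)
    rw [hρ1]
    simp only [Category.assoc]
  | succ n ih =>
    have key := cnat T S χ (gmap T S χ M ρ x n)
    simp only [iter] at key
    simp only [gmap_succ, Category.assoc] at ih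
    simp only [smor_succ, gmap_succ, iter, Functor.map_comp, Category.assoc]
    rw [← reassoc_of% key]
    erw [← Functor.map_comp_assoc, ← Functor.map_comp_assoc, ← Functor.map_comp_assoc]
    erw [show ((smor T n n (M.obj x) ≫ T.map (gmap T S χ M ρ x n)) ≫
          χ.app (iter T.toFunctor n (M.obj x))) ≫ S.map (gmap T S χ M ρ x n)
        = gmap T S χ M ρ x n ≫ S.δ.app (iter T.toFunctor n (M.obj x)) from by
      (erw [Category.assoc, Category.assoc]; erw [Category.assoc] at ih; exact ih)]
    erw [Functor.map_comp_assoc, ← h4 (iter T.toFunctor n (M.obj x))]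

end Aux

section Aux2

variable (T S : Comonad B)
    (χ : (S.toFunctor ⋙ T.toFunctor : B ⥤ B) ⟶ (T.toFunctor ⋙ S.toFunctor : B ⥤ B))
    (M : X ⥤ B) (ρ : (M ⋙ T.toFunctor : X ⥤ B) ⟶ (M ⋙ S.toFunctor : X ⥤ B))
    (x : X)

lemma hmap_succ (n : ℕ) :
    hmap T S χ M ρ x (n + 1)
      = χ.app (iter S.toFunctor n (M.obj x)) ≫ S.map (hmap T S χ M ρ x n) := rfl

/-- Lemma B': `h n ≫ dmor S n n = εᵀ`. -/
lemma hmap_eps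
    (h1 : ∀ Z : B, χ.app Z ≫ S.map (T.ε.app Z) = T.ε.app (S.obj Z))
    (hρ2 : ρ.app x ≫ S.ε.app (M.obj x) = T.ε.app (M.obj x)) :
    ∀ n, hmap T S χ M ρ x n ≫ dmor S n n (M.obj x)
      = T.ε.app (iter S.toFunctor n (M.obj x))
  | 0 => hρ2
  | n + 1 => by
    erw [hmap_succ, dmor_succ, Category.assoc, ← Functor.map_comp,
      hmap_eps h1 hρ2 n, h1]
    rfl

/-- Lemma A': `h(n+1) ≫ dmor S (n+1) k = T(dmor S n k) ≫ h n` for `k ≤ n`. -/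
lemma hmap_dmor
    (h2 : ∀ Z : B, χ.app Z ≫ S.ε.app (T.obj Z) = T.map (S.ε.app Z)) :
    ∀ n k, k ≤ n →
      hmap T S χ M ρ x (n + 1) ≫ dmor S (n + 1) k (M.obj x)
        = T.map (dmor S n k (M.obj x)) ≫ hmap T S χ M ρ x n := by
  have base : ∀ n : ℕ,
      hmap T S χ M ρ x (n + 1) ≫ dmor S (n + 1) 0 (M.obj x)
        = T.map (dmor S n 0 (M.obj x)) ≫ hmap T S χ M ρ x n := by
    intro n
    erw [hmap_succ, dmor_zero, dmor_zero, Category.assoc,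
      enat S (hmap T S χ M ρ x n), ← Category.assoc, h2]
    rfl
  intro n
  induction n with
  | zero =>
    intro k hk
    obtain rfl : k = 0 := Nat.le_zero.mp hk
    exact base 0
  | succ m ih =>
    intro k hk
    match k with
    | 0 => exact base (m + 1)
    | k + 1 =>
      have hkm : k ≤ m := Nat.succ_le_succ_iff.mp hk
      erw [hmap_succ, dmor_succ, Category.assoc, ← Functor.map_comp, ih k hkm,
        Functor.map_comp, ← reassoc_of% (cnat T S χ (dmor S m k (M.obj x))),
        ← hmap_succ, dmor_succ]
      rfl

/-- Lemma C': `h(m+1) ≫ smor S (m+1) k = T(smor S m k) ≫ h(m+2)` for `k ≤ m`. -/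
lemma hmap_smor
    (h4 : ∀ Z : B, χ.app Z ≫ S.δ.app (T.obj Z)
            = T.map (S.δ.app Z) ≫ χ.app (S.obj Z) ≫ S.map (χ.app Z)) :
    ∀ m k, k ≤ m →
      hmap T S χ M ρ x (m + 1) ≫ smor S (m + 1) k (M.obj x)
        = T.map (smor S m k (M.obj x)) ≫ hmap T S χ M ρ x (m + 2) := by
  have base : ∀ m : ℕ,
      hmap T S χ M ρ x (m + 1) ≫ smor S (m + 1) 0 (M.obj x)
        = T.map (smor S m 0 (M.obj x)) ≫ hmap T S χ M ρ x (m + 2) := by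
    intro m
    erw [hmap_succ, smor_zero, smor_zero, Category.assoc,
      dnat S (hmap T S χ M ρ x m),
      reassoc_of% (h4 (iter S.toFunctor m (M.obj x)))]
    simp only [hmap_succ, Functor.map_comp, Category.assoc]
    erw [Functor.map_comp]
    rfl
  intro m
  induction m with
  | zero =>
    intro k hk
    obtain rfl : k = 0 := Nat.le_zero.mp hk
    exact base 0
  | succ p ih =>
    intro k hk
    match k with
    | 0 => exact base (p + 1)
    | k + 1 =>
      have hkp : k ≤ p := Nat.succ_le_succ_iff.mp hk
      erw [hmap_succ, smor_succ, Category.assoc, ← Functor.map_comp, ih k hkp,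
        Functor.map_comp, ← reassoc_of% (cnat T S χ (smor S p k (M.obj x))),
        ← hmap_succ, smor_succ]
      rfl

/-- Lemma D': `h n ≫ smor S n n = δᵀ ≫ T(h n) ≫ h(n+1)`. -/
lemma hmap_delta
    (h3 : ∀ Z : B, χ.app Z ≫ S.map (T.δ.app Z)
            = T.δ.app (S.obj Z) ≫ T.map (χ.app Z) ≫ χ.app (T.obj Z))
    (hρ1 : ρ.app x ≫ S.δ.app (M.obj x)
      = T.δ.app (M.obj x) ≫ T.map (ρ.app x) ≫ χ.app (M.obj x) ≫ S.map (ρ.app x)) :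
    ∀ n, hmap T S χ M ρ x n ≫ smor S n n (M.obj x)
      = T.δ.app (iter S.toFunctor n (M.obj x)) ≫ T.map (hmap T S χ M ρ x n) ≫
          hmap T S χ M ρ x (n + 1) := by
  intro n
  induction n with
  | zero =>
    exact hρ1
  | succ n ih =>
    erw [hmap_succ, smor_succ, Category.assoc, ← Functor.map_comp, ih,
      Functor.map_comp, Functor.map_comp,
      reassoc_of% (h3 (iter S.toFunctor n (M.obj x))),
      ← reassoc_of% (cnat T S χ (hmap T S χ M ρ x n)),
      ← Functor.map_comp_assoc, ← hmap_succ, ← hmap_succ]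
    rfl

end Aux2

lemma lnat (T S : Comonad B) (N : B ⥤ Y)
    (lam : (S.toFunctor ⋙ N : B ⥤ Y) ⟶ (T.toFunctor ⋙ N : B ⥤ Y))
    {A A' : B} (f : A ⟶ A') :
    N.map (S.map f) ≫ lam.app A' = lam.app A ≫ N.map (T.map f) := lam.naturality f


/-- The duplicial operator `t_n := (λT^nM)∘(Nχ^nM)∘(NT^nρ)` on `CC_𝕋(N,M)_n`. -/
def tT (T S : Comonad B)
    (χ : (S.toFunctor ⋙ T.toFunctor : B ⥤ B) ⟶ (T.toFunctor ⋙ S.toFunctor : B ⥤ B))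
    (M : X ⥤ B) (ρ : (M ⋙ T.toFunctor : X ⥤ B) ⟶ (M ⋙ S.toFunctor : X ⥤ B))
    (N : B ⥤ Y) (lam : (S.toFunctor ⋙ N : B ⥤ Y) ⟶ (T.toFunctor ⋙ N : B ⥤ Y))
    (x : X) (n : ℕ) :
    N.obj (iter T.toFunctor (n + 1) (M.obj x)) ⟶
      N.obj (iter T.toFunctor (n + 1) (M.obj x)) :=
  N.map (gmap T S χ M ρ x n) ≫ lam.app (iter T.toFunctor n (M.obj x))

/-- The duplicial operator `t'_n := (NS^nρ)∘(Nχ̂^nM)∘(λS^nM)` on `CC_𝕊^op(N,M)_n`. -/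
def tS (T S : Comonad B)
    (χ : (S.toFunctor ⋙ T.toFunctor : B ⥤ B) ⟶ (T.toFunctor ⋙ S.toFunctor : B ⥤ B))
    (M : X ⥤ B) (ρ : (M ⋙ T.toFunctor : X ⥤ B) ⟶ (M ⋙ S.toFunctor : X ⥤ B))
    (N : B ⥤ Y) (lam : (S.toFunctor ⋙ N : B ⥤ Y) ⟶ (T.toFunctor ⋙ N : B ⥤ Y))
    (x : X) (n : ℕ) :
    N.obj (iter S.toFunctor (n + 1) (M.obj x)) ⟶
      N.obj (iter S.toFunctor (n + 1) (M.obj x)) :=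
  lam.app (iter S.toFunctor n (M.obj x)) ≫ N.map (hmap T S χ M ρ x n)

theorem duplicial_structures
    (T S : Comonad B)
    (χ : (S.toFunctor ⋙ T.toFunctor : B ⥤ B) ⟶ (T.toFunctor ⋙ S.toFunctor : B ⥤ B))
    -- `χ` is a comonad distributive law:
    (h1 : ∀ Z : B, χ.app Z ≫ S.map (T.ε.app Z) = T.ε.app (S.obj Z))
    (h2 : ∀ Z : B, χ.app Z ≫ S.ε.app (T.obj Z) = T.map (S.ε.app Z))
    (h3 : ∀ Z : B, χ.app Z ≫ S.map (T.δ.app Z)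
            = T.δ.app (S.obj Z) ≫ T.map (χ.app Z) ≫ χ.app (T.obj Z))
    (h4 : ∀ Z : B, χ.app Z ≫ S.δ.app (T.obj Z)
            = T.map (S.δ.app Z) ≫ χ.app (S.obj Z) ≫ S.map (χ.app Z))
    -- `(M, ρ)` is a right `χ`-coalgebra:
    (M : X ⥤ B) (ρ : (M ⋙ T.toFunctor : X ⥤ B) ⟶ (M ⋙ S.toFunctor : X ⥤ B))
    (hρ1 : ∀ x : X,
      ρ.app x ≫ S.δ.app (M.obj x)
      = T.δ.app (M.obj x) ≫ T.map (ρ.app x) ≫ χ.app (M.obj x) ≫ S.map (ρ.app x))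
    (hρ2 : ∀ x : X, ρ.app x ≫ S.ε.app (M.obj x) = T.ε.app (M.obj x))
    -- `(N, λ)` is a left `χ`-coalgebra:
    (N : B ⥤ Y) (lam : (S.toFunctor ⋙ N : B ⥤ Y) ⟶ (T.toFunctor ⋙ N : B ⥤ Y))
    (hlam1 : ∀ Z : B,
      lam.app Z ≫ N.map (T.δ.app Z)
      = N.map (S.δ.app Z) ≫ lam.app (S.obj Z) ≫ N.map (χ.app Z) ≫ lam.app (T.obj Z))
    (hlam2 : ∀ Z : B, lam.app Z ≫ N.map (T.ε.app Z) = N.map (S.ε.app Z)) :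
    -- `CC_𝕋(N,M)` is duplicial with operator `t_n`:
    -- `d_i ∘ t_n = t_{n-1} ∘ d_{i-1}` for `1 ≤ i ≤ n`:
    (∀ (n : ℕ) (x : X) (i : ℕ), 1 ≤ i → i ≤ n + 1 →
      tT T S χ M ρ N lam x (n + 1) ≫ N.map (dmor T (n + 1) i (M.obj x))
      = N.map (dmor T (n + 1) (i - 1) (M.obj x)) ≫ tT T S χ M ρ N lam x n) ∧
    -- `d_0 ∘ t_n = d_n`:
    (∀ (n : ℕ) (x : X),
      tT T S χ M ρ N lam x n ≫ N.map (dmor T n 0 (M.obj x))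
      = N.map (dmor T n n (M.obj x))) ∧
    -- `s_j ∘ t_n = t_{n+1} ∘ s_{j-1}` for `1 ≤ j ≤ n`:
    (∀ (n : ℕ) (x : X) (j : ℕ), 1 ≤ j → j ≤ n →
      tT T S χ M ρ N lam x n ≫ N.map (smor T n j (M.obj x))
      = N.map (smor T n (j - 1) (M.obj x)) ≫ tT T S χ M ρ N lam x (n + 1)) ∧
    -- `s_0 ∘ t_n = t_{n+1}² ∘ s_n`:
    (∀ (n : ℕ) (x : X),
      tT T S χ M ρ N lam x n ≫ N.map (smor T n 0 (M.obj x))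
      = N.map (smor T n n (M.obj x)) ≫ tT T S χ M ρ N lam x (n + 1) ≫
          tT T S χ M ρ N lam x (n + 1)) ∧
    -- `CC_𝕊^op(N,M)` is duplicial with operator `t'_n`
    -- (recall the faces are `d_i = NS^{n-i}ε^S S^iM`, degeneracies
    --  `s_j = NS^{n-j}Δ^S S^jM`):
    (∀ (n : ℕ) (x : X) (i : ℕ), 1 ≤ i → i ≤ n + 1 →
      tS T S χ M ρ N lam x (n + 1) ≫ N.map (dmor S (n + 1) (n + 1 - i) (M.obj x))
      = N.map (dmor S (n + 1) (n + 2 - i) (M.obj x)) ≫ tS T S χ M ρ N lam x n) ∧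
    (∀ (n : ℕ) (x : X),
      tS T S χ M ρ N lam x n ≫ N.map (dmor S n n (M.obj x))
      = N.map (dmor S n 0 (M.obj x))) ∧
    (∀ (n : ℕ) (x : X) (j : ℕ), 1 ≤ j → j ≤ n →
      tS T S χ M ρ N lam x n ≫ N.map (smor S n (n - j) (M.obj x))
      = N.map (smor S n (n - (j - 1)) (M.obj x)) ≫ tS T S χ M ρ N lam x (n + 1)) ∧
    (∀ (n : ℕ) (x : X),
      tS T S χ M ρ N lam x n ≫ N.map (smor S n n (M.obj x))
      = N.map (smor S n 0 (M.obj x)) ≫ tS T S χ M ρ N lam x (n + 1) ≫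
          tS T S χ M ρ N lam x (n + 1)) := by
  have lnatr : ∀ {A A' : B} (f : A ⟶ A'),
      N.map (S.map f) ≫ lam.app A' = lam.app A ≫ N.map (T.map f) :=
    fun f => lam.naturality f
  refine ⟨?_, ?_, ?_, ?_, ?_, ?_, ?_, ?_⟩
  · -- T faces, 1 ≤ i ≤ n+1
    intro n x i hi1 hi2
    obtain ⟨k, rfl⟩ : ∃ k, i = k + 1 := ⟨i - 1, by omega⟩
    simp only [tT, Category.assoc, Nat.add_sub_cancel, dmor_succ]
    erw [Category.assoc]
    erw [← lnatr, ← Functor.map_comp_assoc,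
      gmap_dmor T S χ M ρ x h1 n k (by omega), Functor.map_comp_assoc]
  · -- T: d_0 ∘ t_n = d_n
    intro n x
    simp only [tT, dmor_zero, Category.assoc]
    erw [Category.assoc]
    erw [hlam2, ← Functor.map_comp, gmap_eps T S χ M ρ x h2 (hρ2 x) n]
  · -- T degeneracies, 1 ≤ j ≤ n
    intro n x j hj1 hj2
    obtain ⟨m, rfl⟩ : ∃ m, n = m + 1 := ⟨n - 1, by omega⟩
    obtain ⟨k, rfl⟩ : ∃ k, j = k + 1 := ⟨j - 1, by omega⟩
    simp only [tT, smor_succ, Nat.add_sub_cancel, Category.assoc]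
    erw [Category.assoc]
    erw [← lnatr, ← Functor.map_comp_assoc,
      gmap_smor T S χ M ρ x h3 m k (by omega), Functor.map_comp_assoc]
  · -- T: s_0 ∘ t_n = t² ∘ s_n
    intro n x
    have key : smor T n n (M.obj x) ≫ T.map (gmap T S χ M ρ x n) ≫
        χ.app (iter T.toFunctor n (M.obj x)) ≫ S.map (gmap T S χ M ρ x n)
        = gmap T S χ M ρ x n ≫ S.δ.app (iter T.toFunctor n (M.obj x)) := by
      have hd :=
        gmap_delta T S χ M ρ x h4 (hρ1 x) n
      simp only [gmap_succ] at hd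
      erw [Category.assoc] at hd
      exact hd
    simp only [tT, gmap_succ, smor_zero, Functor.map_comp, Category.assoc]
    erw [Functor.map_comp]
    erw [Category.assoc, Category.assoc, Category.assoc, Category.assoc]
    erw [hlam1, ← reassoc_of% (lnatr (gmap T S χ M ρ x n))]
    erw [← Functor.map_comp_assoc, ← key]
    erw [Functor.map_comp_assoc, Functor.map_comp_assoc, Functor.map_comp_assoc]
    rfl
  · -- S faces
    intro n x i hi1 hi2
    obtain ⟨k, hk, e1, e2⟩ : ∃ k, k ≤ n ∧ n + 1 - i = k ∧ n + 2 - i = k + 1 :=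
      ⟨n + 1 - i, by omega, rfl, by omega⟩
    rw [e1, e2]
    simp only [tS, Category.assoc]
    erw [Category.assoc]
    erw [← Functor.map_comp, hmap_dmor T S χ M ρ x h2 n k hk, Functor.map_comp,
      ← reassoc_of% (lnatr (dmor S n k (M.obj x))), dmor_succ]
    rfl
  · -- S: last face
    intro n x
    simp only [tS, Category.assoc]
    erw [Category.assoc]
    erw [← Functor.map_comp, hmap_eps T S χ M ρ x h1 (hρ2 x) n, hlam2, dmor_zero]
    rfl
  · -- S degeneracies
    intro n x j hj1 hj2
    obtain ⟨m, rfl⟩ : ∃ m, n = m + 1 := ⟨n - 1, by omega⟩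
    obtain ⟨k, hk, e1, e2⟩ : ∃ k, k ≤ m ∧ m + 1 - j = k ∧ m + 1 - (j - 1) = k + 1 :=
      ⟨m + 1 - j, by omega, rfl, by omega⟩
    rw [e1, e2]
    simp only [tS, Category.assoc]
    erw [Category.assoc]
    erw [← Functor.map_comp, hmap_smor T S χ M ρ x h4 m k hk, Functor.map_comp,
      ← reassoc_of% (lnatr (smor S m k (M.obj x))), smor_succ]
    rfl
  · -- S: s_0-dual
    intro n x
    simp only [tS, Category.assoc]
    erw [Category.assoc]
    erw [← Functor.map_comp, hmap_delta T S χ M ρ x h3 (hρ1 x) n, Functor.map_comp,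
      Functor.map_comp, reassoc_of% (hlam1 (iter S.toFunctor n (M.obj x))),
      ← reassoc_of% (lnatr (hmap T S χ M ρ x n)),
      ← Functor.map_comp_assoc, ← hmap_succ, smor_zero]
    erw [Category.assoc]
    rfl


end Stmt14
end

section
/- Let (Σ, σ, γ) be a 1-cell from the comonad distributive law χ : TS → ST on B to the comonad distributive law τ : GC' → C'G on D; that is, Σ : B → D is a functor, σ : GΣ → ΣT is a lax morphism of comonads, γ : ΣS → C'Σ is a colax morphism of comonads, and the Yang–Baxter condition (C'σ)∘(τΣ)∘(Gγ) = (γT)∘(Σχ)∘(σS) holds. If (M, ρ) is a right χ-coalgebra, then (ΣM, (γM)∘(Σρ)∘(σM)) is a right τ-coalgebra. -/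
/-!
STATEMENT 17: Let `(Σ, σ, γ)` be a 1-cell from the comonad distributive law
`χ : TS → ST` on `B` to the comonad distributive law `τ : GC' → C'G` on `D`;
i.e. `σ : GΣ → ΣT` is a lax morphism of comonads, `γ : ΣS → C'Σ` a colax morphism
of comonads, and the Yang–Baxter condition holds.  If `(M, ρ)` is a right
`χ`-coalgebra, then `(ΣM, (γM)∘(Σρ)∘(σM))` is a right `τ`-coalgebra.
-/

open CategoryTheory

namespace Stmt17

variable {B D X : Type*} [Category B] [Category D] [Category X]

theorem twist_right_coalgebra
    (T S : Comonad B) (G C' : Comonad D)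
    (χ : (S.toFunctor ⋙ T.toFunctor : B ⥤ B) ⟶ (T.toFunctor ⋙ S.toFunctor : B ⥤ B))
    (τ : (C'.toFunctor ⋙ G.toFunctor : D ⥤ D) ⟶ (G.toFunctor ⋙ C'.toFunctor : D ⥤ D))
    -- `χ` is a comonad distributive law:
    (hχ1 : ∀ Z : B, χ.app Z ≫ S.map (T.ε.app Z) = T.ε.app (S.obj Z))
    (hχ2 : ∀ Z : B, χ.app Z ≫ S.ε.app (T.obj Z) = T.map (S.ε.app Z))
    (hχ3 : ∀ Z : B, χ.app Z ≫ S.map (T.δ.app Z)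
            = T.δ.app (S.obj Z) ≫ T.map (χ.app Z) ≫ χ.app (T.obj Z))
    (hχ4 : ∀ Z : B, χ.app Z ≫ S.δ.app (T.obj Z)
            = T.map (S.δ.app Z) ≫ χ.app (S.obj Z) ≫ S.map (χ.app Z))
    -- `τ` is a comonad distributive law:
    (hτ1 : ∀ W : D, τ.app W ≫ C'.map (G.ε.app W) = G.ε.app (C'.obj W))
    (hτ2 : ∀ W : D, τ.app W ≫ C'.ε.app (G.obj W) = G.map (C'.ε.app W))
    (hτ3 : ∀ W : D, τ.app W ≫ C'.map (G.δ.app W)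
            = G.δ.app (C'.obj W) ≫ G.map (τ.app W) ≫ τ.app (G.obj W))
    (hτ4 : ∀ W : D, τ.app W ≫ C'.δ.app (G.obj W)
            = G.map (C'.δ.app W) ≫ τ.app (C'.obj W) ≫ C'.map (τ.app W))
    -- the 1-cell `(Σ, σ, γ)`:
    (Sig : B ⥤ D)
    (σ : (Sig ⋙ G.toFunctor : B ⥤ D) ⟶ (T.toFunctor ⋙ Sig : B ⥤ D))
    (γ : (S.toFunctor ⋙ Sig : B ⥤ D) ⟶ (Sig ⋙ C'.toFunctor : B ⥤ D))
    -- `σ` is a lax morphism of comonads: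
    (hσδ : ∀ Z : B,
      σ.app Z ≫ Sig.map (T.δ.app Z)
      = G.δ.app (Sig.obj Z) ≫ G.map (σ.app Z) ≫ σ.app (T.obj Z))
    (hσε : ∀ Z : B, σ.app Z ≫ Sig.map (T.ε.app Z) = G.ε.app (Sig.obj Z))
    -- `γ` is a colax morphism of comonads:
    (hγδ : ∀ Z : B,
      γ.app Z ≫ C'.δ.app (Sig.obj Z)
      = Sig.map (S.δ.app Z) ≫ γ.app (S.obj Z) ≫ C'.map (γ.app Z))
    (hγε : ∀ Z : B, γ.app Z ≫ C'.ε.app (Sig.obj Z) = Sig.map (S.ε.app Z))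
    -- the Yang–Baxter condition `(C'σ)∘(τΣ)∘(Gγ) = (γT)∘(Σχ)∘(σS)`:
    (hYB : ∀ Z : B,
      G.map (γ.app Z) ≫ τ.app (Sig.obj Z) ≫ C'.map (σ.app Z)
      = σ.app (S.obj Z) ≫ Sig.map (χ.app Z) ≫ γ.app (T.obj Z))
    -- `(M, ρ)` is a right `χ`-coalgebra:
    (M : X ⥤ B) (ρ : (M ⋙ T.toFunctor : X ⥤ B) ⟶ (M ⋙ S.toFunctor : X ⥤ B))
    (hρ1 : ∀ x : X,
      ρ.app x ≫ S.δ.app (M.obj x)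
      = T.δ.app (M.obj x) ≫ T.map (ρ.app x) ≫ χ.app (M.obj x) ≫ S.map (ρ.app x))
    (hρ2 : ∀ x : X, ρ.app x ≫ S.ε.app (M.obj x) = T.ε.app (M.obj x)) :
    -- then `(ΣM, (γM)∘(Σρ)∘(σM))` is a right `τ`-coalgebra:
    (∀ x : X,
      (σ.app (M.obj x) ≫ Sig.map (ρ.app x) ≫ γ.app (M.obj x)) ≫
        C'.δ.app (Sig.obj (M.obj x))
      = G.δ.app (Sig.obj (M.obj x)) ≫
          G.map (σ.app (M.obj x) ≫ Sig.map (ρ.app x) ≫ γ.app (M.obj x)) ≫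
          τ.app (Sig.obj (M.obj x)) ≫
          C'.map (σ.app (M.obj x) ≫ Sig.map (ρ.app x) ≫ γ.app (M.obj x))) ∧
    (∀ x : X,
      (σ.app (M.obj x) ≫ Sig.map (ρ.app x) ≫ γ.app (M.obj x)) ≫
        C'.ε.app (Sig.obj (M.obj x))
      = G.ε.app (Sig.obj (M.obj x))) := by
  constructor
  · intro x
    have nσ := σ.naturality (ρ.app x)
    have nγ := γ.naturality (ρ.app x)
    simp only [Functor.comp_map, Functor.comp_obj] at nσ nγ
    simp only [Category.assoc, Functor.map_comp]
    rw [hγδ]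
    slice_lhs 2 3 => rw [← Functor.map_comp, hρ1]
    simp only [Functor.map_comp, Category.assoc]
    slice_lhs 1 2 => rw [hσδ]
    simp only [Category.assoc]
    slice_lhs 3 4 => rw [← nσ]
    simp only [Category.assoc]
    slice_lhs 6 7 => rw [nγ]
    simp only [Category.assoc]
    slice_lhs 4 6 => rw [← hYB]
    simp only [Category.assoc]
  · intro x
    simp only [Category.assoc]
    rw [hγε, ← Functor.map_comp, hρ2, hσε]

end Stmt17
end

section
/- On the category of sets, let L⁺ be the nonempty-list endofunctor, with monad structure given by η(x) = [x] and μ = concatenation (join), and comonad structure given by ε = head and Δ[x₁,…,x_n] = [[x₁,…,x_n],[x₂,…,x_n],…,[x_n]] (the list of nonempty suffixes). Define θ : L⁺L⁺ → L⁺L⁺ by: for a nonempty list [l₁,…,l_m] of nonempty lists with l_i = [x_{i,1},…,x_{i,n_i}], θ[l₁,…,l_m] is the list whose entries, in lexicographic order of the pairs (i,j) with 1 ≤ i ≤ m and 1 ≤ j ≤ n_i, are the nonempty lists [x_{i,j}, x_{i+1,1}, x_{i+2,1}, …, x_{m,1}]. Then θ is a natural transformation and a mixed distributive law between the monad L⁺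 and the comonad L⁺: θ∘(μL⁺) = (L⁺μ)∘(θL⁺)∘(L⁺θ), θ∘(ηL⁺) = L⁺η, (ΔL⁺)∘θ = (L⁺θ)∘(θL⁺)∘(L⁺Δ), and (εL⁺)∘θ = L⁺ε. -/
/-!
STATEMENT 18: On the category of sets, the nonempty-list endofunctor `L⁺` carries a
monad structure (unit `η x = [x]`, multiplication = concatenation) and a comonad
structure (counit = head, comultiplication = list of nonempty suffixes).  The map
`θ : L⁺L⁺ → L⁺L⁺` sending `[l₁,…,l_m]` (with `l_i = [x_{i,1},…,x_{i,n_i}]`) to the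
list of the lists `[x_{i,j}, x_{i+1,1}, …, x_{m,1}]` in lexicographic order of `(i,j)`
is a natural transformation and a mixed distributive law between the monad `L⁺` and
the comonad `L⁺`.

Nonempty lists over `X` are modelled as pairs `(x, l) : X × List X` (head and tail).
-/

namespace Stmt18

/-- Nonempty lists over `X`, modelled as head-tail pairs. -/
abbrev NEL (X : Type*) : Type _ := X × List X

/-- The underlying list of a nonempty list. -/
def toList {X : Type*} (p : NEL X) : List X := p.1 :: p.2

/-- Functorial action of `L⁺`. -/
def mapNE {X Y : Type*} (f : X → Y) (p : NEL X) : NEL Y :=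
  (f p.1, p.2.map f)

/-- The unit `η : X → L⁺X`, `x ↦ [x]`. -/
def eta {X : Type*} (x : X) : NEL X := (x, [])

/-- The multiplication `μ : L⁺L⁺X → L⁺X`, concatenation (join) of a nonempty
list of nonempty lists. -/
def mu {X : Type*} (q : NEL (NEL X)) : NEL X :=
  (q.1.1, q.1.2 ++ q.2.flatMap toList)

/-- The counit `ε : L⁺X → X`, head. -/
def eps {X : Type*} (p : NEL X) : X := p.1

/-- The nonempty suffixes of a list, as nonempty lists. -/
def suff {X : Type*} : List X → List (NEL X)
  | [] => []
  | y :: t => (y, t) :: suff t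

/-- The comultiplication `Δ : L⁺X → L⁺L⁺X`,
`[x₁,…,x_n] ↦ [[x₁,…,x_n],[x₂,…,x_n],…,[x_n]]` (the nonempty suffixes). -/
def delta {X : Type*} (p : NEL X) : NEL (NEL X) :=
  (p, suff p.2)

/-- The tail blocks of `θ`: for a list `[l_i, …, l_m]` of nonempty lists, the
concatenation over `i ≤ k ≤ m` of the blocks `[[x_{k,j}, x_{k+1,1}, …, x_{m,1}] : j]`. -/
def blocks {X : Type*} : List (NEL X) → List (NEL X)
  | [] => []
  | l :: rest => (toList l).map (fun a => (a, rest.map Prod.fst)) ++ blocks rest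

/-- The mixed distributive law `θ : L⁺L⁺X → L⁺L⁺X`: the entries of
`θ [l₁,…,l_m]`, in lexicographic order of the pairs `(i,j)`, are the nonempty
lists `[x_{i,j}, x_{i+1,1}, …, x_{m,1}]`. -/
def theta {X : Type*} (q : NEL (NEL X)) : NEL (NEL X) :=
  ((q.1.1, q.2.map Prod.fst),
    q.1.2.map (fun a => (a, q.2.map Prod.fst)) ++ blocks q.2)



lemma toList_map {X Y : Type*} (f : X → Y) (p : NEL X) :
    toList (mapNE f p) = (toList p).map f := rfl

lemma blocks_map {X Y : Type*} (f : X → Y) (l : List (NEL X)) :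
    blocks (l.map (mapNE f)) = (blocks l).map (mapNE f) := by
  induction l with
  | nil => rfl
  | cons a rest ih =>
      simp [blocks, toList, ih, mapNE, List.map_map, Function.comp_def]

lemma blocks_append {X : Type*} (l r : List (NEL X)) :
    blocks (l ++ r) =
      (blocks l).map (fun p => (p.1, p.2 ++ r.map Prod.fst)) ++ blocks r := by
  induction l with
  | nil => simp [blocks]
  | cons a rest ih =>
      simp [blocks, ih, List.map_map, Function.comp_def]

lemma toList_theta {X : Type*} (q : NEL (NEL X)) :
    toList (theta q) = blocks (toList q) := by
  rcases q with ⟨⟨h1, h2⟩, rest⟩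
  simp [toList, theta, blocks, List.map_map]

lemma fst_flatMap {X : Type*} (rest : List (NEL (NEL X))) :
    (rest.flatMap toList).map Prod.fst
      = ((rest.map theta).map Prod.fst).flatMap toList := by
  simp [List.map_flatMap, List.flatMap_map, toList, theta]

lemma blocks_flatMap {X : Type*} (rest : List (NEL (NEL X))) :
    blocks (rest.flatMap toList) = (blocks (rest.map theta)).map mu := by
  induction rest with
  | nil => rfl
  | cons r rest' ih =>
      rw [List.flatMap_cons, blocks_append, ih, List.map_cons, blocks,
        ← toList_theta, List.map_append, fst_flatMap]
      congr 1
      rw [toList_theta, List.map_map, List.map_map]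
      apply List.map_congr_left
      intro a _
      simp [mu, Function.comp_def]

lemma suff_append {X : Type*} (l r : List X) :
    suff (l ++ r) = (suff l).map (fun p => (p.1, p.2 ++ r)) ++ suff r := by
  induction l with
  | nil => simp [suff]
  | cons a rest ih => simp [suff, ih]

lemma suff_map {X Y : Type*} (f : X → Y) (l : List X) :
    suff (l.map f) = (suff l).map (mapNE f) := by
  induction l with
  | nil => rfl
  | cons a rest ih => simp [suff, ih, mapNE]

lemma fst_delta {X : Type*} (l : List (NEL X)) :
    (l.map delta).map Prod.fst = l := by
  simp [delta, Function.comp_def]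

lemma map_fst_delta {X : Type*} (l : List (NEL X)) :
    l.map (Prod.fst ∘ delta) = l := by
  simp [delta, Function.comp_def]

lemma map_fst_fst_delta {X : Type*} (l : List (NEL X)) :
    l.map (Prod.fst ∘ Prod.fst ∘ delta) = l.map Prod.fst := by
  simp [delta, Function.comp_def]

lemma suff_blocks {X : Type*} (rest : List (NEL X)) :
    suff (blocks rest) = (blocks (rest.map delta)).map theta := by
  induction rest with
  | nil => rfl
  | cons l rest' ih =>
      have htl : toList (delta l) = l :: suff l.2 := rfl
      rw [List.map_cons, blocks, blocks, suff_append, suff_map, ih,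
        List.map_append, fst_delta, htl, List.map_map, List.map_map]
      have hsl : suff (toList l) = l :: suff l.2 := rfl
      rw [hsl]
      congr 1

/-- `θ` is a natural transformation and a mixed distributive law between the
monad `L⁺` and the comonad `L⁺`. -/
theorem theta_mixed_distributive_law :
    -- naturality of `θ`:
    (∀ (X Y : Type) (f : X → Y) (q : NEL (NEL X)),
      theta (mapNE (mapNE f) q) = mapNE (mapNE f) (theta q)) ∧
    -- `θ∘(μL⁺) = (L⁺μ)∘(θL⁺)∘(L⁺θ)`:
    (∀ (X : Type) (q : NEL (NEL (NEL X))),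
      theta (mu q) = mapNE mu (theta (mapNE theta q))) ∧
    -- `θ∘(ηL⁺) = L⁺η`:
    (∀ (X : Type) (p : NEL X), theta (eta p) = mapNE eta p) ∧
    -- `(ΔL⁺)∘θ = (L⁺θ)∘(θL⁺)∘(L⁺Δ)`:
    (∀ (X : Type) (q : NEL (NEL X)),
      delta (theta q) = mapNE theta (theta (mapNE delta q))) ∧
    -- `(εL⁺)∘θ = L⁺ε`:
    (∀ (X : Type) (q : NEL (NEL X)), eps (theta q) = mapNE eps q) := by
  refine ⟨?_, ?_, ?_, ?_, ?_⟩
  · intro X Y f ⟨⟨a, l⟩, rest⟩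
    simp [theta, mapNE, blocks_map, toList, List.map_map, Function.comp_def]
  · intro X ⟨⟨h, t⟩, rest⟩
    simp only [theta, mu, mapNE, blocks_append, blocks_flatMap, fst_flatMap,
      List.map_append, List.map_map, List.append_assoc]
    rfl
  · intro X ⟨a, l⟩
    simp [theta, eta, mapNE, blocks, List.map_map, Function.comp_def]
  · intro X ⟨h, rest⟩
    simp only [delta, theta, mapNE, suff_append, suff_map, suff_blocks,
      fst_delta, map_fst_delta, map_fst_fst_delta, List.map_append, List.map_map]
    rfl
  · intro X ⟨⟨a, l⟩, rest⟩
    simp [theta, eps, mapNE, Function.comp_def]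

end Stmt18
end
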